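/- arXiv:2307.05569 — 5 statements merged into one kernel-verified Lean document; each statement's English description precedes it below -/
import Mathlib

section
/- Let D=(V,A) be a digraph with V nonempty. Then ∑_F (−1)^{|F|} · #{σ ∈ S_V : F ⊆ A_σ} = (number of Hamiltonian paths of the complement D̄), where the sum ranges over all linear subsets F of A, S_V is the symmetric group of V, and A_σ := {(v,σ(v)) : v ∈ V}. -/
open scoped Classical

noncomputable section

/-- The power sum `p_k = x_1^k + x_2^k + ⋯` as a formal power series over `R`
in countably many variables indexed by the positive integers. -/
def pSumR (R : Type) [CommRing R] (k : ℕ) : MvPowerSeries ℕ+ R :=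
  fun d => if ∃ i : ℕ+, d = Finsupp.single i k then 1 else 0

/-- The power sum `p_k` over `ℤ`. -/
def pSum (k : ℕ) : MvPowerSeries ℕ+ ℤ := pSumR ℤ k

/-- The fundamental quasisymmetric function `L_{I,n}` (with positions 0-indexed):
its coefficient at a monomial `d` is the number of weakly increasing `n`-tuples
`(i_0, …, i_{n-1})` of positive integers, strictly increasing at the positions in `I`,
whose associated monomial `x_{i_0} ⋯ x_{i_{n-1}}` is `d`. -/
def Lfun (n : ℕ) (I : Set ℕ) : MvPowerSeries ℕ+ ℤ :=
  fun d =>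
    ((Set.ncard {i : Fin n → ℕ+ |
        Monotone i ∧
        (∀ (p : ℕ) (h : p + 1 < n), p ∈ I → i ⟨p, Nat.lt_of_succ_lt h⟩ < i ⟨p + 1, h⟩) ∧
        (∑ k : Fin n, Finsupp.single (i k) 1) = d}) : ℤ)

/-- The descent set `Des(w, D)` (0-indexed) of the `V`-listing `w = (e 0, e 1, …, e (n-1))`
with respect to the digraph with arc set `A`. -/
def descents {V : Type} (A : Set (V × V)) {n : ℕ} (e : Fin n ≃ V) : Set ℕ :=
  {p | ∃ h : p + 1 < n, (e ⟨p, Nat.lt_of_succ_lt h⟩, e ⟨p + 1, h⟩) ∈ A}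

/-- The Redei–Berge symmetric function `U_D` of the digraph `D = (V, A)`. -/
def redeiBerge (V : Type) [Fintype V] [DecidableEq V] (A : Set (V × V)) :
    MvPowerSeries ℕ+ ℤ :=
  ∑ e : Fin (Fintype.card V) ≃ V, Lfun (Fintype.card V) (descents A e)

/-- The cycles of a permutation `σ`, each represented by its set of entries
(i.e. by the corresponding orbit of `σ`). -/
def cyclesOf {V : Type} [Fintype V] [DecidableEq V] (σ : Equiv.Perm V) :
    Finset (Finset V) :=
  Finset.univ.image fun v => Finset.univ.filter fun u => σ.SameCycle v u

/-- `p_{type σ}`: the product of `p_{ℓ(γ)}` over all cycles `γ` of `σ`. -/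
def pType {V : Type} [Fintype V] [DecidableEq V] (σ : Equiv.Perm V) :
    MvPowerSeries ℕ+ ℤ :=
  ∏ O ∈ cyclesOf σ, pSum O.card

/-- `φ(σ) = ∑ (ℓ(γ) - 1)`, summed over all cycles `γ` of `σ` that are `D`-cycles.
A cycle of `σ` with orbit `O` is a `D`-cycle iff all its cyclic arcs `(u, σ u)`
(for `u ∈ O`) lie in `A`. -/
def phi {V : Type} [Fintype V] [DecidableEq V] (A : Set (V × V)) (σ : Equiv.Perm V) : ℕ :=
  ∑ O ∈ (cyclesOf σ).filter (fun O => ∀ u ∈ O, (u, σ u) ∈ A), (O.card - 1)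

/-- `σ ∈ S_V(D, D̄)`: each cycle of `σ` is a `D`-cycle or a `D̄`-cycle. -/
def memSVDDbar {V : Type} [Fintype V] [DecidableEq V] (A : Set (V × V))
    (σ : Equiv.Perm V) : Prop :=
  ∀ O ∈ cyclesOf σ, (∀ u ∈ O, (u, σ u) ∈ A) ∨ (∀ u ∈ O, (u, σ u) ∉ A)

/-- `σ ∈ S_V(D)`: each nontrivial cycle of `σ` is a `D`-cycle. -/
def memSVD {V : Type} [Fintype V] [DecidableEq V] (A : Set (V × V))
    (σ : Equiv.Perm V) : Prop :=
  ∀ O ∈ cyclesOf σ, 1 < O.card → ∀ u ∈ O, (u, σ u) ∈ A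

/-- `ψ(σ)`: the number of nontrivial cycles of `σ`. -/
def psi {V : Type} [Fintype V] [DecidableEq V] (σ : Equiv.Perm V) : ℕ :=
  ((cyclesOf σ).filter fun O => 1 < O.card).card

/-- The digraph `(V, A)` is a tournament: no loops, and for any two distinct vertices
`u, v`, exactly one of `(u,v)` and `(v,u)` is an arc. -/
def IsTournament {V : Type} (A : Set (V × V)) : Prop :=
  (∀ u : V, (u, u) ∉ A) ∧ ∀ u v : V, u ≠ v → Xor' ((u, v) ∈ A) ((v, u) ∈ A)

/-- The number of Hamiltonian paths of the digraph `(W, B)` (the empty list counts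
as a Hamiltonian path when `W` is empty). -/
def hampCount (W : Type) [Fintype W] (B : Set (W × W)) : ℕ :=
  Set.ncard {w : List W | w.Nodup ∧ (∀ x : W, x ∈ w) ∧ w.Chain' fun a b => (a, b) ∈ B}

/-- `A_σ = {(v, σ v) : v ∈ V}`. -/
def ApermSet {V : Type} (σ : Equiv.Perm V) : Set (V × V) :=
  Set.range fun v => (v, σ v)

/-- The arc set of a tuple (encoded as a list): the set of its consecutive pairs. -/
def arcsList {V : Type} (p : List V) : Set (V × V) := {a | a ∈ p.zip p.tail}

/-- `C` is a path cover of `V`: a set of paths of `V` (nonempty tuples of distinct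
elements) such that each element of `V` belongs to exactly one of these paths. -/
def IsPathCover (V : Type) (C : Set (List V)) : Prop :=
  (∀ p ∈ C, p ≠ [] ∧ p.Nodup) ∧ ∀ v : V, ∃! p, p ∈ C ∧ v ∈ p

/-- The arc set of a path cover. -/
def arcsCover {V : Type} (C : Set (List V)) : Set (V × V) :=
  ⋃ p ∈ C, arcsList p

/-- A subset `F ⊆ V × V` is linear if it is the arc set of some path cover of `V`. -/
def IsLinear (V : Type) (F : Set (V × V)) : Prop :=
  ∃ C : Set (List V), IsPathCover V C ∧ F = arcsCover C

namespace RB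

set_option linter.unusedSectionVars false
set_option maxHeartbeats 1000000
variable {V : Type} [DecidableEq V] [Fintype V]

/-- membership in zip-with-tail characterized by indices -/
lemma mem_zip_tail {l : List V} {a b : V} :
    (a, b) ∈ l.zip l.tail ↔ ∃ i : ℕ, ∃ h : i + 1 < l.length,
      l.get ⟨i, Nat.lt_of_succ_lt h⟩ = a ∧ l.get ⟨i+1, h⟩ = b := by
  induction l with
  | nil => simp
  | cons x t ih =>
    cases t with
    | nil => simp
    | cons y t' =>
      constructor
      · intro hmem
        rcases List.mem_cons.mp hmem with h | h
        · exact ⟨0, by simp, by simp [Prod.ext_iff] at h ⊢; exact ⟨h.1.symm, h.2.symm⟩⟩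
        · rcases ih.mp h with ⟨i, hi, h1, h2⟩
          exact ⟨i+1, by simpa using Nat.succ_lt_succ hi, by simpa using h1, by simpa using h2⟩
      · rintro ⟨i, hi, h1, h2⟩
        cases i with
        | zero => simp at h1 h2; subst h1; subst h2; exact List.mem_cons_self
        | succ j =>
          refine List.mem_cons_of_mem _ (ih.mpr ⟨j, ?_, ?_, ?_⟩)
          · exact Nat.lt_of_succ_lt_succ hi
          · simpa using h1
          · simpa using h2

lemma chain'_iff_zip {R : V → V → Prop} {l : List V} :
    l.Chain' R ↔ ∀ a b : V, (a, b) ∈ l.zip l.tail → R a b := by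
  rw [show l.Chain' R ↔ l.IsChain R from Iff.rfl, List.isChain_iff_getElem]
  constructor
  · intro h a b hm
    rcases mem_zip_tail.mp hm with ⟨i, hi, h1, h2⟩
    have := h i (by omega)
    simp only [List.get_eq_getElem] at h1 h2
    rwa [h1, h2] at this
  · intro h i hi
    exact h _ _ (mem_zip_tail.mpr ⟨i, by omega, rfl, rfl⟩)

/-- number of "listings" of a finset -/
lemma ncard_listings (s : Finset V) :
    Set.ncard {w : List V | w.Nodup ∧ ∀ x : V, x ∈ w ↔ x ∈ s} = s.card.factorial := by
  have hset : {w : List V | w.Nodup ∧ ∀ x : V, x ∈ w ↔ x ∈ s}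
      = ↑(s.toList.permutations.toFinset) := by
    ext w
    simp only [Set.mem_setOf_eq, Finset.coe_sort_coe, Finset.mem_coe, List.mem_toFinset,
      List.mem_permutations]
    constructor
    · rintro ⟨hnd, hmem⟩
      refine List.perm_of_nodup_nodup_toFinset_eq hnd (Finset.nodup_toList s) ?_
      ext x
      simp [hmem, Finset.mem_toList]
    · intro hp
      refine ⟨hp.nodup_iff.mpr (Finset.nodup_toList s), fun x => ?_⟩
      rw [hp.mem_iff, Finset.mem_toList]
  rw [hset, Set.ncard_coe_finset,
    List.toFinset_card_of_nodup (List.nodup_permutations _ (Finset.nodup_toList s)),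
    List.length_permutations, Finset.length_toList]


lemma zip_tail_cons {t : List V} {a : V} {pr : V × V} (h : pr ∈ t.zip t.tail) :
    pr ∈ (a :: t).zip (a :: t).tail := by
  cases t with
  | nil => simp at h
  | cons c s =>
    simp only [List.tail_cons] at h ⊢
    simp only [List.zip_cons_cons, List.mem_cons]
    exact Or.inr h

lemma zip_tail_cons_cons (a b : V) (s : List V) :
    (a, b) ∈ ((a :: b :: s)).zip ((a :: b :: s)).tail := by
  simp [List.zip_cons_cons]

lemma zip_tail_cases {a : V} {t : List V} {pr : V × V}
    (h : pr ∈ (a :: t).zip (a :: t).tail) :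
    (∃ c s, t = c :: s ∧ pr = (a, c)) ∨ pr ∈ t.zip t.tail := by
  cases t with
  | nil => simp at h
  | cons c s =>
    simp only [List.tail_cons, List.zip_cons_cons, List.mem_cons] at h ⊢
    rcases h with h | h
    · exact Or.inl ⟨c, s, rfl, h⟩
    · exact Or.inr h

section Orb
variable (F : Finset (V × V)) (rank : V → ℕ)

/-- vertices with no predecessor -/
def heads : Finset V := Finset.univ.filter (fun v => ∀ u : V, (u, v) ∉ F)

def orb (hrank : ∀ u v, (u,v) ∈ F → rank v = rank u + 1) (v : V) : List V :=
  v :: (if h : ∃ u, (v, u) ∈ F then orb hrank h.choose else [])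
termination_by Finset.univ.sup rank + 1 - rank v
decreasing_by
  have h1 := hrank v h.choose h.choose_spec
  have h2 : rank v ≤ Finset.univ.sup rank := Finset.le_sup (Finset.mem_univ v)
  omega

variable (hrank : ∀ u v, (u,v) ∈ F → rank v = rank u + 1)
variable (hfun : ∀ u v v', (u,v) ∈ F → (u,v') ∈ F → v = v')
variable (hinj : ∀ u u' v, (u,v) ∈ F → (u',v) ∈ F → u = u')

lemma orb_eq (v : V) : orb F rank hrank v =
    v :: (if h : ∃ u, (v, u) ∈ F then orb F rank hrank h.choose else []) := by
  rw [orb]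

lemma orb_ne_nil (v : V) : orb F rank hrank v ≠ [] := by
  rw [orb_eq]; simp

lemma self_mem_orb (v : V) : v ∈ orb F rank hrank v := by
  rw [orb_eq]; exact List.mem_cons_self

lemma head_orb (v : V) : (orb F rank hrank v).head (orb_ne_nil F rank hrank v) = v := by
  have h := orb_eq F rank hrank v
  rw [List.head_eq_iff_head?_eq_some, h]
  simp

lemma rank_le_of_mem_orb (v : V) : ∀ x ∈ orb F rank hrank v, rank v ≤ rank x := by
  induction v using orb.induct F rank hrank with
  | _ v ih =>
    intro x hx
    rw [orb_eq] at hx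
    rcases List.mem_cons.mp hx with rfl | h
    · exact le_rfl
    · split at h
      · next hex =>
        have h1 := hrank v hex.choose hex.choose_spec
        have := ih hex x h
        omega
      · simp at h

lemma nodup_orb (v : V) : (orb F rank hrank v).Nodup := by
  induction v using orb.induct F rank hrank with
  | _ v ih =>
    rw [orb_eq]
    split
    · next hex =>
      refine List.nodup_cons.mpr ⟨fun hmem => ?_, ih hex⟩
      have h1 := hrank v hex.choose hex.choose_spec
      have := rank_le_of_mem_orb F rank hrank hex.choose v hmem
      omega
    · simp

lemma mem_orb_cases (v : V) : ∀ x ∈ orb F rank hrank v,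
    x = v ∨ ∃ u, u ∈ orb F rank hrank v ∧ (u, x) ∈ F := by
  induction v using orb.induct F rank hrank with
  | _ v ih =>
    intro x hx
    rw [orb_eq] at hx
    rcases List.mem_cons.mp hx with rfl | h
    · exact Or.inl rfl
    · split at h
      · next hex =>
        rcases ih hex x h with h' | ⟨u, hu, huF⟩
        · subst h'
          exact Or.inr ⟨v, self_mem_orb F rank hrank v, hex.choose_spec⟩
        · refine Or.inr ⟨u, ?_, huF⟩
          rw [orb_eq, dif_pos hex]
          exact List.mem_cons_of_mem _ hu
      · simp at h

include hfun in
lemma orb_succ_zip (v : V) : ∀ u x, u ∈ orb F rank hrank v → (u, x) ∈ F →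
    (u, x) ∈ (orb F rank hrank v).zip (orb F rank hrank v).tail := by
  induction v using orb.induct F rank hrank with
  | _ v ih =>
    intro u x hu hF
    rw [orb_eq] at hu
    rcases List.mem_cons.mp hu with rfl | h
    · have hex : ∃ y, (u, y) ∈ F := ⟨x, hF⟩
      rw [orb_eq, dif_pos hex]
      have hx : hex.choose = x := hfun u hex.choose x hex.choose_spec hF
      rw [orb_eq F rank hrank hex.choose, hx]
      exact zip_tail_cons_cons _ _ _
    · split at h
      · next hex =>
        have := ih hex u x h hF
        rw [orb_eq, dif_pos hex]
        exact zip_tail_cons this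
      · simp at h

include hfun in
lemma mem_orb_of_succ {v u x : V} (hu : u ∈ orb F rank hrank v) (hF : (u, x) ∈ F) :
    x ∈ orb F rank hrank v :=
  List.mem_of_mem_tail (List.of_mem_zip (orb_succ_zip F rank hrank hfun v u x hu hF)).2

lemma orb_arcs_sub (v : V) : ∀ a b : V,
    (a, b) ∈ (orb F rank hrank v).zip (orb F rank hrank v).tail → (a, b) ∈ F := by
  induction v using orb.induct F rank hrank with
  | _ v ih =>
    intro a b h
    rw [orb_eq] at h
    split at h
    · next hex =>
      rcases zip_tail_cases h with ⟨c, s, hcs, hpr⟩ | h'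
      · have hc : c = hex.choose := by
          have h2 := orb_eq F rank hrank hex.choose
          rw [hcs] at h2
          exact (List.cons.injEq _ _ _ _ ▸ h2).1
        obtain ⟨ha, hb⟩ : a = v ∧ b = c := by simpa [Prod.ext_iff] using hpr
        rw [ha, hb, hc]
        exact hex.choose_spec
      · exact ih hex a b h'
    · simp at h

include hinj in
/-- uniqueness of the head whose orbit contains `x` -/
lemma orb_head_unique : ∀ x h h' : V, h ∈ heads F → h' ∈ heads F →
    x ∈ orb F rank hrank h → x ∈ orb F rank hrank h' → h = h' := by
  have key : ∀ n, ∀ x, rank x = n → ∀ h h' : V, h ∈ heads F → h' ∈ heads F →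
      x ∈ orb F rank hrank h → x ∈ orb F rank hrank h' → h = h' := by
    intro n
    induction n using Nat.strong_induction_on with
    | _ n ihn =>
      rintro x rfl h h' hh hh' hx hx'
      have hh2 := hh; have hh2' := hh'
      simp only [heads, Finset.mem_filter] at hh2 hh2'
      rcases mem_orb_cases F rank hrank h x hx with rfl | ⟨u, hu, huF⟩
      · rcases mem_orb_cases F rank hrank h' x hx' with rfl | ⟨u, hu, huF⟩
        · rfl
        · exact absurd huF (hh2.2 u)
      · rcases mem_orb_cases F rank hrank h' x hx' with rfl | ⟨u', hu', huF'⟩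
        · exact absurd huF (hh2'.2 u)
        · have heq : u = u' := hinj u u' x huF huF'
          subst heq
          have hlt : rank u < rank x := by have := hrank u x huF; omega
          exact ihn (rank u) hlt u rfl h h' hh hh' hu hu'
  intro x; exact key (rank x) x rfl

include hfun in
lemma exists_head_orb : ∀ x : V, ∃ h ∈ heads F, x ∈ orb F rank hrank h := by
  have key : ∀ n, ∀ x, rank x = n → ∃ h ∈ heads F, x ∈ orb F rank hrank h := by
    intro n
    induction n using Nat.strong_induction_on with
    | _ n ihn =>
      rintro x rfl
      by_cases hx : x ∈ heads F
      · exact ⟨x, hx, self_mem_orb F rank hrank x⟩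
      · have : ∃ u, (u, x) ∈ F := by
          simpa [heads, Finset.mem_filter] using hx
        obtain ⟨u, hu⟩ := this
        have hlt : rank u < rank x := by have := hrank u x hu; omega
        obtain ⟨h, hh, hmem⟩ := ihn (rank u) hlt u rfl
        exact ⟨h, hh, mem_orb_of_succ F rank hrank hfun hmem hu⟩
  intro x; exact key (rank x) x rfl

/-- the canonical path cover induced by F -/
def cover : Set (List V) := (fun h => orb F rank hrank h) '' ↑(heads F)

include hrank hfun hinj in
lemma isPathCover_cover : IsPathCover V (cover F rank hrank) := by
  constructor
  · rintro p ⟨h, hh, rfl⟩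
    exact ⟨orb_ne_nil F rank hrank h, nodup_orb F rank hrank h⟩
  · intro x
    obtain ⟨h, hh, hmem⟩ := exists_head_orb F rank hrank hfun x
    refine ⟨orb F rank hrank h, ⟨⟨h, hh, rfl⟩, hmem⟩, ?_⟩
    rintro q ⟨⟨h', hh', rfl⟩, hq⟩
    rw [orb_head_unique F rank hrank hinj x h' h hh' hh hq hmem]

include hrank hfun hinj in
lemma arcsCover_cover : (↑F : Set (V × V)) = arcsCover (cover F rank hrank) := by
  ext ⟨a, b⟩
  simp only [arcsCover, arcsList, Set.mem_iUnion, Set.mem_setOf_eq, Finset.mem_coe]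
  constructor
  · intro hab
    obtain ⟨h, hh, hmem⟩ := exists_head_orb F rank hrank hfun a
    exact ⟨orb F rank hrank h, ⟨h, hh, rfl⟩, orb_succ_zip F rank hrank hfun h a b hmem hab⟩
  · rintro ⟨p, ⟨h, hh, rfl⟩, hzip⟩
    exact orb_arcs_sub F rank hrank h a b hzip

include hrank hfun hinj in
lemma isLinear_of_props : IsLinear V (↑F : Set (V × V)) :=
  ⟨cover F rank hrank, isPathCover_cover F rank hrank hfun hinj,
    arcsCover_cover F rank hrank hfun hinj⟩

lemma filter_heads_orb (h : V) (hh : h ∈ heads F) :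
    (orb F rank hrank h).filter (fun x => x ∈ heads F) = [h] := by
  obtain ⟨t, ht⟩ : ∃ t, orb F rank hrank h = h :: t := ⟨_, orb_eq F rank hrank h⟩
  have hnd : (h :: t).Nodup := ht ▸ nodup_orb F rank hrank h
  rw [ht, List.filter_cons, if_pos (by simpa using hh)]
  congr 1
  rw [List.filter_eq_nil_iff]
  intro x hx
  have hxo : x ∈ orb F rank hrank h := ht ▸ List.mem_cons_of_mem _ hx
  have hxh : x ≠ h := fun he => (List.nodup_cons.mp hnd).1 (he ▸ hx)
  rcases mem_orb_cases F rank hrank h x hxo with he | ⟨u, _, huF⟩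
  · exact absurd he hxh
  · simp only [heads, Finset.mem_filter, Finset.mem_univ, true_and, decide_eq_true_eq]
    intro hcon
    exact hcon u huF


lemma mem_zip_tail_suffix : ∀ {w t : List V}, t <:+ w → w.Nodup →
    ∀ {u v : V}, u ∈ t → (u, v) ∈ w.zip w.tail → (u, v) ∈ t.zip t.tail := by
  intro w
  induction w with
  | nil =>
    intro t ht _ u v hu _
    rw [List.suffix_nil.mp ht] at hu
    simp at hu
  | cons x w' ih =>
    intro t ht hnd u v hu hz
    rcases List.suffix_cons_iff.mp ht with rfl | ht'
    · exact hz
    · have hu' : u ∈ w' := ht'.subset hu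
      rcases zip_tail_cases hz with ⟨c, s, hcs, hpr⟩ | h'
      · exfalso
        have : u = x := congrArg Prod.fst hpr
        exact (List.nodup_cons.mp hnd).1 (this ▸ hu')
      · exact ih ht' (List.nodup_cons.mp hnd).2 hu h'

lemma zip_tail_append_left {l1 l2 : List V} {pr : V × V}
    (h : pr ∈ l1.zip l1.tail) : pr ∈ (l1 ++ l2).zip (l1 ++ l2).tail := by
  induction l1 with
  | nil => simp at h
  | cons x s ih =>
    rcases zip_tail_cases h with ⟨c, s', hcs, hpr⟩ | h'
    · subst hcs; subst hpr
      exact zip_tail_cons_cons _ _ _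
    · exact zip_tail_cons (ih h')

lemma zip_tail_append_right {l1 l2 : List V} {pr : V × V}
    (h : pr ∈ l2.zip l2.tail) : pr ∈ (l1 ++ l2).zip (l1 ++ l2).tail := by
  induction l1 with
  | nil => simpa using h
  | cons x s ih => exact zip_tail_cons ih

include hfun in
lemma orb_prefix : ∀ (n : ℕ) (w : List V) (a : V) (t : List V), w.length ≤ n →
    w = a :: t → w.Nodup →
    (∀ u v, (u, v) ∈ F → u ∈ w → (u, v) ∈ w.zip w.tail) →
    orb F rank hrank a <+: w := by
  intro n
  induction n with
  | zero => intro w a t hlen hw _ _; subst hw; simp at hlen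
  | succ n ih =>
    rintro w a t hlen rfl hnd hc
    rw [orb_eq]
    split
    · next hex =>
      set c := hex.choose with hc_def
      have hcF : (a, c) ∈ F := hex.choose_spec
      have hz := hc a c hcF (List.mem_cons_self)
      rcases zip_tail_cases hz with ⟨c', s, hcs, hpr⟩ | h'
      · have hcc : c = c' := congrArg Prod.snd hpr
        subst hcc
        subst hcs
        have hpre : orb F rank hrank c <+: c :: s := by
          refine ih (c :: s) c s (by simpa using hlen) rfl (List.nodup_cons.mp hnd).2 ?_
          intro u v huv hu
          exact mem_zip_tail_suffix (List.suffix_cons a (c :: s)) hnd hu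
            (hc u v huv (List.mem_cons_of_mem _ hu))
        exact (List.cons_prefix_cons).mpr ⟨rfl, hpre⟩
      · exfalso
        exact (List.nodup_cons.mp hnd).1 (List.of_mem_zip h').1
    · exact ⟨t, rfl⟩

/-- expansion of a list of heads into a full list -/
def psiL (L : List V) : List V := (L.map (orb F rank hrank)).flatten

include hfun in
lemma psi_filter : ∀ (n : ℕ) (w : List V), w.length ≤ n → w.Nodup →
    (∀ u v, (u, v) ∈ F → u ∈ w → (u, v) ∈ w.zip w.tail) →
    (∀ u v, (u, v) ∈ F → v ∈ w → u ∈ w) →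
    psiL F rank hrank (w.filter (fun x => x ∈ heads F)) = w := by
  intro n
  induction n with
  | zero =>
    intro w hlen _ _ _
    rw [List.length_eq_zero_iff.mp (Nat.le_zero.mp hlen)]
    simp [psiL]
  | succ n ih =>
    intro w hlen hnd hc hq
    cases w with
    | nil => simp [psiL]
    | cons a t =>
      have ha : a ∈ heads F := by
        by_contra hna
        have : ∃ u, (u, a) ∈ F := by simpa [heads, Finset.mem_filter] using hna
        obtain ⟨u, huF⟩ := this
        have hu : u ∈ a :: t := hq u a huF (List.mem_cons_self)
        have hz := hc u a huF hu
        have hat : a ∈ t := by simpa using (List.of_mem_zip hz).2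
        exact (List.nodup_cons.mp hnd).1 hat
      obtain ⟨rest, hw⟩ := orb_prefix F rank hrank hfun (n+1) (a :: t) a t hlen rfl hnd hc
      set p := orb F rank hrank a with hp_def
      have hndp : (p ++ rest).Nodup := hw ▸ hnd
      have hnd_rest : rest.Nodup := hndp.of_append_right
      have hdisj : p.Disjoint rest := List.disjoint_of_nodup_append hndp
      have hsuf : rest <:+ a :: t := ⟨p, hw⟩
      have hc_rest : ∀ u v, (u, v) ∈ F → u ∈ rest → (u, v) ∈ rest.zip rest.tail := by
        intro u v huv hu
        exact mem_zip_tail_suffix hsuf hnd hu (hc u v huv (hsuf.subset hu))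
      have hq_rest : ∀ u v, (u, v) ∈ F → v ∈ rest → u ∈ rest := by
        intro u v huv hv
        have hu : u ∈ a :: t := hq u v huv (hsuf.subset hv)
        rw [← hw] at hu
        rcases List.mem_append.mp hu with hup | hur
        · exfalso
          exact hdisj (mem_orb_of_succ F rank hrank hfun hup huv) hv
        · exact hur
      have hlen_rest : rest.length ≤ n := by
        have h1 : (a :: t).length = p.length + rest.length := by
          rw [← hw, List.length_append]
        have h2 : 1 ≤ p.length := by
          cases hpn : p
          · exact absurd hpn (orb_ne_nil F rank hrank a)
          · simp
        simp only [List.length_cons] at h1 hlen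
        omega
      have hIH := ih rest hlen_rest hnd_rest hc_rest hq_rest
      have hfil : (a :: t).filter (fun x => x ∈ heads F)
          = a :: rest.filter (fun x => x ∈ heads F) := by
        rw [← hw, List.filter_append, filter_heads_orb F rank hrank a ha]
        rfl
      rw [hfil, psiL, List.map_cons, List.flatten_cons]
      rw [psiL] at hIH
      rw [hIH, ← hp_def, hw]

lemma zip_tail_flatten {LL : List (List V)} {p : List V} {pr : V × V}
    (hp : p ∈ LL) (h : pr ∈ p.zip p.tail) :
    pr ∈ LL.flatten.zip LL.flatten.tail := by
  induction LL with
  | nil => simp at hp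
  | cons q LL' ih =>
    rw [List.flatten_cons]
    rcases List.mem_cons.mp hp with rfl | hp'
    · exact zip_tail_append_left h
    · exact zip_tail_append_right (ih hp')

include hinj in
lemma psi_nodup (L : List V) (hLnd : L.Nodup) (hLh : ∀ x ∈ L, x ∈ heads F) :
    (psiL F rank hrank L).Nodup := by
  rw [psiL, List.nodup_flatten]
  constructor
  · rintro l hl
    rw [List.mem_map] at hl
    obtain ⟨h, _, rfl⟩ := hl
    exact nodup_orb F rank hrank h
  · rw [List.pairwise_map]
    refine List.Pairwise.imp_of_mem ?_ hLnd
    intro a b ha hb hne x hxa hxb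
    exact hne (orb_head_unique F rank hrank hinj x a b (hLh a ha) (hLh b hb) hxa hxb)

include hfun in
lemma psi_complete (L : List V) (hL : ∀ x : V, x ∈ L ↔ x ∈ heads F) :
    ∀ x : V, x ∈ psiL F rank hrank L := by
  intro x
  obtain ⟨h, hh, hmem⟩ := exists_head_orb F rank hrank hfun x
  rw [psiL, List.mem_flatten]
  exact ⟨orb F rank hrank h, List.mem_map_of_mem ((hL h).mpr hh), hmem⟩

include hfun in
lemma psi_arcs (L : List V) (hL : ∀ x : V, x ∈ L ↔ x ∈ heads F) :
    ∀ u v : V, (u, v) ∈ F →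
      (u, v) ∈ (psiL F rank hrank L).zip (psiL F rank hrank L).tail := by
  intro u v huv
  obtain ⟨h, hh, hmem⟩ := exists_head_orb F rank hrank hfun u
  exact zip_tail_flatten (List.mem_map_of_mem ((hL h).mpr hh))
    (orb_succ_zip F rank hrank hfun h u v hmem huv)

lemma filter_psi (L : List V) (hLh : ∀ x ∈ L, x ∈ heads F) :
    (psiL F rank hrank L).filter (fun x => x ∈ heads F) = L := by
  rw [psiL, List.filter_flatten, List.map_map]
  have hmap : L.map ((List.filter (fun x => decide (x ∈ heads F))) ∘ (orb F rank hrank))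
      = L.map (fun h => [h]) := by
    apply List.map_congr_left
    intro h hh
    exact filter_heads_orb F rank hrank h (hLh h hh)
  rw [hmap]
  clear hmap hLh
  induction L with
  | nil => simp
  | cons a L' ihL =>
    rw [List.map_cons, List.flatten_cons, List.singleton_append, ihL]

include hrank hfun hinj in
lemma ncard_w_side :
    Set.ncard {w : List V | w.Nodup ∧ (∀ x : V, x ∈ w) ∧
      (↑F : Set (V × V)) ⊆ arcsList w} = (heads F).card.factorial := by
  rw [← ncard_listings (heads F)]
  rw [← Nat.card_coe_set_eq, ← Nat.card_coe_set_eq]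
  apply Nat.card_congr
  refine ⟨fun w => ⟨(w : List V).filter (fun x => x ∈ heads F), ?_, ?_⟩,
    fun L => ⟨psiL F rank hrank (L : List V), ?_, ?_, ?_⟩, ?_, ?_⟩
  · exact w.2.1.filter _
  · intro x
    simp only [List.mem_filter, decide_eq_true_eq]
    exact ⟨fun hx => hx.2, fun hx => ⟨w.2.2.1 x, hx⟩⟩
  · exact psi_nodup F rank hrank hinj _ L.2.1 (fun x hx => (L.2.2 x).mp hx)
  · exact psi_complete F rank hrank hfun _ L.2.2
  · intro pr hpr
    obtain ⟨u, v⟩ := pr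
    exact psi_arcs F rank hrank hfun _ L.2.2 u v hpr
  · rintro ⟨w, hnd, hcomp, harcs⟩
    apply Subtype.ext
    refine psi_filter F rank hrank hfun w.length w le_rfl hnd ?_ ?_
    · intro u v huv _
      exact harcs huv
    · intro u v _ _
      exact hcomp u
  · rintro ⟨L, hnd, hmem⟩
    apply Subtype.ext
    exact filter_psi F rank hrank L (fun x hx => (hmem x).mp hx)

def tailsF : Finset V := Finset.univ.filter (fun v => ∀ u : V, (v, u) ∉ F)

lemma mem_tailsF {v : V} : v ∈ tailsF F ↔ ∀ u : V, (v, u) ∉ F := by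
  simp [tailsF]

lemma mem_headsF {v : V} : v ∈ heads F ↔ ∀ u : V, (u, v) ∉ F := by
  simp [heads]

include hfun hinj in
lemma card_tails_eq_card_heads : (tailsF F).card = (heads F).card := by
  have h1 : (tailsF F)ᶜ = F.image Prod.fst := by
    ext v
    simp only [Finset.mem_compl, mem_tailsF, not_forall, not_not, Finset.mem_image]
    constructor
    · rintro ⟨u, hu⟩; exact ⟨(v, u), hu, rfl⟩
    · rintro ⟨⟨a, b⟩, hab, rfl⟩; exact ⟨b, hab⟩
  have h2 : (heads F)ᶜ = F.image Prod.snd := by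
    ext v
    simp only [Finset.mem_compl, mem_headsF, not_forall, not_not, Finset.mem_image]
    constructor
    · rintro ⟨u, hu⟩; exact ⟨(u, v), hu, rfl⟩
    · rintro ⟨⟨a, b⟩, hab, rfl⟩; exact ⟨a, hab⟩
  have c1 : (F.image Prod.fst).card = F.card := by
    apply Finset.card_image_of_injOn
    rintro ⟨a, b⟩ hab ⟨a', b'⟩ hab' h
    simp only at h
    subst h
    rw [hfun a b b' hab hab']
  have c2 : (F.image Prod.snd).card = F.card := by
    apply Finset.card_image_of_injOn
    rintro ⟨a, b⟩ hab ⟨a', b'⟩ hab' h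
    simp only at h
    subst h
    rw [hinj a a' b hab hab']
  have d1 := Finset.card_compl (tailsF F)
  have d2 := Finset.card_compl (heads F)
  rw [h1, c1] at d1
  rw [h2, c2] at d2
  have e1 : (tailsF F).card ≤ Fintype.card V := Finset.card_le_univ _
  have e2 : (heads F).card ≤ Fintype.card V := Finset.card_le_univ _
  omega

lemma mem_ApermSet_iff {σ : Equiv.Perm V} {u v : V} : (u, v) ∈ ApermSet σ ↔ σ u = v := by
  constructor
  · rintro ⟨w, hw⟩
    obtain ⟨h1, h2⟩ : w = u ∧ σ w = v := by
      constructor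
      · exact congrArg Prod.fst hw
      · exact congrArg Prod.snd hw
    rw [← h1]; exact h2
  · intro h; exact ⟨u, by simp [h]⟩

include hfun hinj in
lemma ncard_sigma_side :
    Set.ncard {σ : Equiv.Perm V | (↑F : Set (V × V)) ⊆ ApermSet σ}
      = (heads F).card.factorial := by
  rw [← Nat.card_coe_set_eq]
  have hEquiv : {σ : Equiv.Perm V // (↑F : Set (V × V)) ⊆ ApermSet σ}
      ≃ (↥(tailsF F) ≃ ↥(heads F)) := by
    have hP : ∀ (σ : Equiv.Perm V), (↑F : Set (V × V)) ⊆ ApermSet σ →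
        ∀ u v : V, (u, v) ∈ F → σ u = v := by
      intro σ hσ u v h
      exact mem_ApermSet_iff.mp (hσ (Finset.mem_coe.mpr h))
    refine ⟨fun σp => ⟨fun t => ⟨σp.1 t.1, ?_⟩, fun h => ⟨σp.1.symm h.1, ?_⟩, ?_, ?_⟩,
      fun e => ?_, ?_, ?_⟩
    · rw [mem_headsF]
      intro u hu
      have := hP σp.1 σp.2 u (σp.1 t.1) hu
      have hut : u = t.1 := σp.1.injective this
      subst hut
      exact ((mem_tailsF F).mp t.2) (σp.1 t.1) hu
    · rw [mem_tailsF]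
      intro u hu
      have := hP σp.1 σp.2 (σp.1.symm h.1) u hu
      rw [Equiv.apply_symm_apply] at this
      subst this
      exact ((mem_headsF F).mp h.2) (σp.1.symm h.1) hu
    · intro t; exact Subtype.ext (σp.1.symm_apply_apply t.1)
    · intro h; exact Subtype.ext (σp.1.apply_symm_apply h.1)
    -- invFun
    · have hg : ∀ u : V, ¬(∃ v, (u, v) ∈ F) → u ∈ tailsF F := by
        intro u h
        rw [mem_tailsF]
        intro v hv
        exact h ⟨v, hv⟩
      set g : V → V := fun u =>
        if h : ∃ v, (u, v) ∈ F then h.choose else (e ⟨u, hg u h⟩ : V) with hg_def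
      have hginj : Function.Injective g := by
        intro u1 u2 heq
        by_cases h1 : ∃ v, (u1, v) ∈ F <;> by_cases h2 : ∃ v, (u2, v) ∈ F
        · rw [hg_def] at heq
          simp only [dif_pos h1, dif_pos h2] at heq
          exact hinj u1 u2 h2.choose (heq ▸ h1.choose_spec) h2.choose_spec
        · exfalso
          rw [hg_def] at heq
          simp only [dif_pos h1, dif_neg h2] at heq
          have hh : (g u2 : V) ∈ heads F := by
            rw [hg_def]; simp only [dif_neg h2]; exact (e ⟨u2, hg u2 h2⟩).2
          rw [hg_def] at hh
          simp only [dif_neg h2] at hh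
          rw [← heq] at hh
          exact ((mem_headsF F).mp hh) u1 h1.choose_spec
        · exfalso
          rw [hg_def] at heq
          simp only [dif_neg h1, dif_pos h2] at heq
          have hh : ((e ⟨u1, hg u1 h1⟩ : ↥(heads F)) : V) ∈ heads F := (e ⟨u1, hg u1 h1⟩).2
          rw [heq] at hh
          exact ((mem_headsF F).mp hh) u2 h2.choose_spec
        · rw [hg_def] at heq
          simp only [dif_neg h1, dif_neg h2] at heq
          have := e.injective (Subtype.ext heq)
          exact congrArg Subtype.val this
      have hgbij : Function.Bijective g := Finite.injective_iff_bijective.mp hginj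
      refine ⟨Equiv.ofBijective g hgbij, ?_⟩
      rintro ⟨u, v⟩ hpr
      rw [Finset.mem_coe] at hpr
      change (u, v) ∈ ApermSet _
      have : Equiv.ofBijective g hgbij u = v := by
        show g u = v
        rw [hg_def]
        have hex : ∃ w, (u, w) ∈ F := ⟨v, hpr⟩
        simp only [dif_pos hex]
        exact hfun u hex.choose v hex.choose_spec hpr
      exact mem_ApermSet_iff.mpr this
    -- left_inv
    · intro σp
      apply Subtype.ext
      apply Equiv.ext
      intro u
      show (if h : ∃ v, (u, v) ∈ F then h.choose else _) = σp.1 u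
      by_cases h : ∃ v, (u, v) ∈ F
      · rw [dif_pos h]
        exact (hP σp.1 σp.2 u h.choose h.choose_spec).symm
      · rw [dif_neg h]
        rfl
    -- right_inv
    · intro e
      apply Equiv.ext
      intro t
      apply Subtype.ext
      show (if h : ∃ v, ((t : V), v) ∈ F then h.choose else _) = ((e t : ↥(heads F)) : V)
      have hne : ¬∃ v, ((t : V), v) ∈ F := by
        rintro ⟨v, hv⟩
        exact ((mem_tailsF F).mp t.2) v hv
      rw [dif_neg hne]
  obtain ⟨e0⟩ : Nonempty (↥(tailsF F) ≃ ↥(heads F)) := by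
    apply Fintype.card_eq.mp
    rw [Fintype.card_coe, Fintype.card_coe]
    exact card_tails_eq_card_heads F hfun hinj
  have h3 : Nat.card ↑{σ : Equiv.Perm V | (↑F : Set (V × V)) ⊆ ApermSet σ}
      = Nat.card (↥(tailsF F) ≃ ↥(heads F)) := Nat.card_congr hEquiv
  rw [h3, Nat.card_eq_fintype_card, Fintype.card_equiv e0, Fintype.card_coe]
  rw [card_tails_eq_card_heads F hfun hinj]

include hrank hfun hinj in
lemma counts_eq :
    Set.ncard {σ : Equiv.Perm V | (↑F : Set (V × V)) ⊆ ApermSet σ}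
      = Set.ncard {w : List V | w.Nodup ∧ (∀ x : V, x ∈ w) ∧
          (↑F : Set (V × V)) ⊆ arcsList w} := by
  rw [ncard_sigma_side F hfun hinj, ncard_w_side F rank hrank hfun hinj]

end Orb

lemma zip_tail_functional {p : List V} (hnd : p.Nodup) {a b b' : V}
    (h : (a, b) ∈ p.zip p.tail) (h' : (a, b') ∈ p.zip p.tail) : b = b' := by
  obtain ⟨i, hi, hai, hbi⟩ := mem_zip_tail.mp h
  obtain ⟨j, hj, haj, hbj⟩ := mem_zip_tail.mp h'
  have : (⟨i, Nat.lt_of_succ_lt hi⟩ : Fin p.length) = ⟨j, Nat.lt_of_succ_lt hj⟩ :=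
    (hnd.get_inj_iff).mp (by rw [hai, haj])
  have hij : i = j := congrArg Fin.val this
  subst hij
  rw [← hbi, ← hbj]

lemma zip_tail_injective {p : List V} (hnd : p.Nodup) {a a' b : V}
    (h : (a, b) ∈ p.zip p.tail) (h' : (a', b) ∈ p.zip p.tail) : a = a' := by
  obtain ⟨i, hi, hai, hbi⟩ := mem_zip_tail.mp h
  obtain ⟨j, hj, haj, hbj⟩ := mem_zip_tail.mp h'
  have : (⟨i + 1, hi⟩ : Fin p.length) = ⟨j + 1, hj⟩ :=
    (hnd.get_inj_iff).mp (by rw [hbi, hbj])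
  have hij : i = j := by
    have := congrArg Fin.val this
    simpa using this
  subst hij
  rw [← hai, ← haj]

lemma zip_tail_rank {p : List V} (hnd : p.Nodup) {a b : V}
    (h : (a, b) ∈ p.zip p.tail) : p.idxOf b = p.idxOf a + 1 := by
  obtain ⟨i, hi, hai, hbi⟩ := mem_zip_tail.mp h
  have h1 : p.idxOf a = i := by
    rw [← hai]; exact List.get_idxOf hnd _
  have h2 : p.idxOf b = i + 1 := by
    rw [← hbi]; exact List.get_idxOf hnd _
  omega

/-- all three structural properties, from a listing whose arcs contain F -/
lemma props_of_listing (F : Finset (V × V)) (w : List V) (hnd : w.Nodup)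
    (hcomp : ∀ x : V, x ∈ w) (harcs : ∀ pr ∈ F, pr ∈ w.zip w.tail) :
    (∀ u v v' : V, (u,v) ∈ F → (u,v') ∈ F → v = v') ∧
    (∀ u u' v : V, (u,v) ∈ F → (u',v) ∈ F → u = u') ∧
    (∃ rank : V → ℕ, ∀ u v : V, (u,v) ∈ F → rank v = rank u + 1) := by
  refine ⟨fun u v v' h h' => zip_tail_functional hnd (harcs _ h) (harcs _ h'),
    fun u u' v h h' => zip_tail_injective hnd (harcs _ h) (harcs _ h'),
    ⟨fun x => w.idxOf x, fun u v h => zip_tail_rank hnd (harcs _ h)⟩⟩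

/-- all three structural properties, from a path cover -/
lemma props_of_isLinear (F : Finset (V × V)) (hlin : IsLinear V (↑F : Set (V × V))) :
    (∀ u v v' : V, (u,v) ∈ F → (u,v') ∈ F → v = v') ∧
    (∀ u u' v : V, (u,v) ∈ F → (u',v) ∈ F → u = u') ∧
    (∃ rank : V → ℕ, ∀ u v : V, (u,v) ∈ F → rank v = rank u + 1) := by
  obtain ⟨C, hC, hFC⟩ := hlin
  choose P hP using fun x : V => (hC.2 x)
  have hmemF : ∀ u v : V, (u,v) ∈ F → ∃ p, p ∈ C ∧ (u,v) ∈ p.zip p.tail := by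
    intro u v h
    have h2 : ((u,v) : V × V) ∈ arcsCover C := by
      rw [← hFC]; exact Finset.mem_coe.mpr h
    simpa [arcsCover, arcsList] using h2
  have key : ∀ u v : V, (u,v) ∈ F → (u,v) ∈ (P u).zip (P u).tail ∧ P v = P u := by
    intro u v h
    obtain ⟨p, hpC, hz⟩ := hmemF u v h
    have hu : u ∈ p := (List.of_mem_zip hz).1
    have hv : v ∈ p := List.mem_of_mem_tail (List.of_mem_zip hz).2
    have e1 : p = P u := (hP u).2 p ⟨hpC, hu⟩
    have e2 : p = P v := (hP v).2 p ⟨hpC, hv⟩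
    constructor
    · rw [← e1]; exact hz
    · rw [← e1, ← e2]
  have hndP : ∀ x : V, (P x).Nodup := fun x => (hC.1 _ (hP x).1.1).2
  refine ⟨?_, ?_, ⟨fun x => (P x).idxOf x, ?_⟩⟩
  · intro u v v' h h'
    exact zip_tail_functional (hndP u) (key u v h).1 (key u v' h').1
  · intro u u' v h h'
    have k1 := key u v h
    have k2 := key u' v h'
    have z1 := k1.1
    have z2 := k2.1
    rw [← k1.2] at z1
    rw [← k2.2] at z2
    exact zip_tail_injective (hndP v) z1 z2
  · intro u v h
    have k := key u v h
    show List.idxOf v (P v) = List.idxOf u (P u) + 1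
    rw [k.2]
    exact zip_tail_rank (hndP u) k.1

theorem main (V : Type) [Fintype V] [DecidableEq V] (A : Set (V × V)) :
    ∑ F ∈ Finset.univ.filter
        (fun F : Finset (V × V) =>
          (↑F : Set (V × V)) ⊆ A ∧ IsLinear V (↑F : Set (V × V))),
      (-1 : ℤ) ^ F.card *
        (Set.ncard {σ : Equiv.Perm V | (↑F : Set (V × V)) ⊆ ApermSet σ} : ℤ)
      = (hampCount V Aᶜ : ℤ) := by
  classical
  set Lst : Finset (List V) := (Finset.univ : Finset V).toList.permutations.toFinset
    with hLst_def
  have hLst : ∀ w : List V, w ∈ Lst ↔ (w.Nodup ∧ ∀ x : V, x ∈ w) := by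
    intro w
    rw [hLst_def, List.mem_toFinset, List.mem_permutations]
    constructor
    · intro hp
      refine ⟨hp.nodup_iff.mpr (Finset.nodup_toList _), fun x => ?_⟩
      rw [hp.mem_iff, Finset.mem_toList]
      exact Finset.mem_univ x
    · rintro ⟨hnd, hmem⟩
      refine List.perm_of_nodup_nodup_toFinset_eq hnd (Finset.nodup_toList _) ?_
      ext x
      simp [hmem x, Finset.mem_toList]
  set AF : List V → Finset (V × V) :=
    fun w => (w.zip w.tail).toFinset.filter (fun pr => pr ∈ A) with hAF_def
  -- counting listings extending a linear G
  have hwcount : ∀ G : Finset (V × V),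
      Set.ncard {w : List V | w.Nodup ∧ (∀ x : V, x ∈ w) ∧
          (↑G : Set (V × V)) ⊆ arcsList w}
        = (Lst.filter (fun w => (↑G : Set (V × V)) ⊆ arcsList w)).card := by
    intro G
    have hset : {w : List V | w.Nodup ∧ (∀ x : V, x ∈ w) ∧
        (↑G : Set (V × V)) ⊆ arcsList w}
        = ↑(Lst.filter (fun w => (↑G : Set (V × V)) ⊆ arcsList w)) := by
      ext w
      simp only [Set.mem_setOf_eq, Finset.coe_filter, hLst]
      tauto
    rw [hset, Set.ncard_coe_finset]
  -- per-term equality for linear G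
  have hterm : ∀ G : Finset (V × V), IsLinear V (↑G : Set (V × V)) →
      Set.ncard {σ : Equiv.Perm V | (↑G : Set (V × V)) ⊆ ApermSet σ}
        = (Lst.filter (fun w => (↑G : Set (V × V)) ⊆ arcsList w)).card := by
    intro G hlin
    obtain ⟨hfun, hinj, rank, hrank⟩ := props_of_isLinear G hlin
    rw [counts_eq G rank hrank hfun hinj, hwcount G]
  -- linearity from a listing witness
  have hlin_of_w : ∀ (G : Finset (V × V)) (w : List V), w ∈ Lst →
      (↑G : Set (V × V)) ⊆ arcsList w → IsLinear V (↑G : Set (V × V)) := by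
    intro G w hw harc
    obtain ⟨hnd, hcomp⟩ := (hLst w).mp hw
    obtain ⟨hfun, hinj, rank, hrank⟩ := props_of_listing G w hnd hcomp
      (fun pr hpr => harc (Finset.mem_coe.mpr hpr))
    exact isLinear_of_props G rank hrank hfun hinj
  -- hampCount as a sum
  have hham : (hampCount V Aᶜ : ℤ) = ∑ w ∈ Lst, if AF w = ∅ then (1 : ℤ) else 0 := by
    have hset : {w : List V | w.Nodup ∧ (∀ x : V, x ∈ w) ∧
        w.Chain' fun a b => (a, b) ∈ Aᶜ}
        = ↑(Lst.filter (fun w => AF w = ∅)) := by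
      ext w
      simp only [Set.mem_setOf_eq, Finset.coe_filter, hLst, Set.mem_setOf_eq]
      have hchain : (w.Chain' fun a b => (a, b) ∈ Aᶜ) ↔ AF w = ∅ := by
        rw [chain'_iff_zip, hAF_def]
        simp only [Finset.filter_eq_empty_iff, List.mem_toFinset]
        constructor
        · rintro h ⟨a, b⟩ hab
          exact h a b hab
        · intro h a b hab
          exact h hab
      tauto
    rw [hampCount, hset, Set.ncard_coe_finset, Finset.card_filter]
    push_cast
    rfl
  have step2 : ∑ w ∈ Lst, (if AF w = ∅ then (1 : ℤ) else 0)
      = ∑ w ∈ Lst, ∑ G ∈ (AF w).powerset, (-1 : ℤ) ^ G.card := by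
    refine Finset.sum_congr rfl fun w _ => ?_
    rw [Finset.sum_powerset_neg_one_pow_card]
  have step3 : ∀ w : List V, ∑ G ∈ (AF w).powerset, (-1 : ℤ) ^ G.card
      = ∑ G ∈ (Finset.univ : Finset (Finset (V × V))),
          if G ⊆ AF w then (-1 : ℤ) ^ G.card else 0 := by
    intro w
    rw [← Finset.sum_filter]
    apply Finset.sum_congr _ (fun _ _ => rfl)
    ext G
    simp [Finset.mem_powerset]
  have step5 : ∀ G : Finset (V × V),
      ∑ w ∈ Lst, (if G ⊆ AF w then (-1 : ℤ) ^ G.card else 0)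
      = (-1 : ℤ) ^ G.card * ((Lst.filter (fun w => G ⊆ AF w)).card : ℤ) := by
    intro G
    rw [← Finset.sum_filter, Finset.sum_const, nsmul_eq_mul, mul_comm]
  have hbig : ∑ w ∈ Lst, (if AF w = ∅ then (1 : ℤ) else 0)
      = ∑ G ∈ (Finset.univ : Finset (Finset (V × V))),
          (-1 : ℤ) ^ G.card * ((Lst.filter (fun w => G ⊆ AF w)).card : ℤ) := by
    rw [step2]
    rw [Finset.sum_congr rfl (fun w _ => step3 w)]
    rw [Finset.sum_comm]
    exact Finset.sum_congr rfl (fun G _ => step5 G)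
  have hvanish : ∀ G : Finset (V × V), G ∈ (Finset.univ : Finset (Finset (V × V))) →
      G ∉ Finset.univ.filter (fun G : Finset (V × V) =>
        (↑G : Set (V × V)) ⊆ A ∧ IsLinear V (↑G : Set (V × V))) →
      (-1 : ℤ) ^ G.card * ((Lst.filter (fun w => G ⊆ AF w)).card : ℤ) = 0 := by
    intro G _ hG
    rw [Finset.mem_filter] at hG
    push_neg at hG
    have hG' := hG (Finset.mem_univ G)
    have hempty : Lst.filter (fun w => G ⊆ AF w) = ∅ := by
      rw [Finset.filter_eq_empty_iff]
      intro w hw hsub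
      have hGA : (↑G : Set (V × V)) ⊆ A := by
        intro pr hpr
        have h2 := hsub (Finset.mem_coe.mp hpr)
        rw [hAF_def] at h2
        simp only [Finset.mem_filter, List.mem_toFinset] at h2
        exact h2.2
      have harc : (↑G : Set (V × V)) ⊆ arcsList w := by
        intro pr hpr
        have h2 := hsub (Finset.mem_coe.mp hpr)
        rw [hAF_def] at h2
        simp only [Finset.mem_filter, List.mem_toFinset] at h2
        exact h2.1
      exact (hG' hGA) (hlin_of_w G w hw harc)
    rw [hempty]
    simp
  have hrestrict := Finset.sum_subset (Finset.filter_subset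
    (fun G : Finset (V × V) => (↑G : Set (V × V)) ⊆ A ∧ IsLinear V (↑G : Set (V × V)))
    Finset.univ) hvanish
  rw [hham, hbig, ← hrestrict]
  refine Finset.sum_congr rfl fun G hG => ?_
  rw [Finset.mem_filter] at hG
  obtain ⟨-, hGA, hGlin⟩ := hG
  have hfe : Lst.filter (fun w => G ⊆ AF w)
      = Lst.filter (fun w => (↑G : Set (V × V)) ⊆ arcsList w) := by
    apply Finset.filter_congr
    intro w _
    constructor
    · intro hsub pr hpr
      have h2 := hsub (Finset.mem_coe.mp hpr)
      rw [hAF_def] at h2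
      simp only [Finset.mem_filter, List.mem_toFinset] at h2
      exact h2.1
    · intro hsub pr hpr
      rw [hAF_def]
      simp only [Finset.mem_filter, List.mem_toFinset]
      exact ⟨hsub (Finset.mem_coe.mpr hpr), hGA (Finset.mem_coe.mpr hpr)⟩
  rw [hfe, ← hterm G hGlin]

end RB

/-- **Lemma (counting hamps by inclusion-exclusion).** For a digraph `D = (V, A)` with
`V` nonempty, `∑_F (-1)^{|F|} · #{σ ∈ S_V : F ⊆ A_σ} = #hamps(D̄)`, where the sum ranges
over all linear subsets `F` of `A`. -/
theorem hamps_by_linear_subsets (V : Type) [Fintype V] [DecidableEq V]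
    (hV : Nonempty V) (A : Set (V × V)) :
    ∑ F ∈ Finset.univ.filter
        (fun F : Finset (V × V) =>
          (↑F : Set (V × V)) ⊆ A ∧ IsLinear V (↑F : Set (V × V))),
      (-1 : ℤ) ^ F.card *
        (Set.ncard {σ : Equiv.Perm V | (↑F : Set (V × V)) ⊆ ApermSet σ} : ℤ)
      = (hampCount V Aᶜ : ℤ) := RB.main V A
end
end

section
/- Let V be a finite set and let F ⊆ V×V be such that F = Arcs C for some path cover C of V. Then the number of V-listings v satisfying F ⊆ Arcs v equals |C|! (the factorial of the number of paths in C). -/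
open scoped Classical

noncomputable section

namespace Aux
variable {V : Type}

lemma arcs_nil : arcsList ([] : List V) = ∅ := by
  ext ⟨a, b⟩; simp [arcsList]

lemma arcs_single (a : V) : arcsList [a] = ∅ := by
  ext ⟨x, y⟩; simp [arcsList]

lemma arcs_cons₂ (a b : V) (t : List V) :
    arcsList (a :: b :: t) = insert (a, b) (arcsList (b :: t)) := by
  ext ⟨x, y⟩; simp [arcsList, Prod.ext_iff, or_comm]

lemma mem_arcs_fst {w : List V} {a b : V} (h : (a, b) ∈ arcsList w) : a ∈ w :=
  (List.of_mem_zip h).1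

lemma mem_arcs_snd_tail {w : List V} {a b : V} (h : (a, b) ∈ arcsList w) : b ∈ w.tail :=
  (List.of_mem_zip h).2

lemma arcs_subset_cons (a : V) (t : List V) : arcsList t ⊆ arcsList (a :: t) := by
  cases t with
  | nil => simp [arcs_nil]
  | cons b t' => rw [arcs_cons₂]; exact Set.subset_insert _ _

lemma arcs_append_right (u v : List V) : arcsList v ⊆ arcsList (u ++ v) := by
  induction u with
  | nil => simp
  | cons a u' ih => exact ih.trans (arcs_subset_cons a _)

lemma arcs_append_left (u v : List V) : arcsList u ⊆ arcsList (u ++ v) := by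
  induction u with
  | nil => simp [arcs_nil]
  | cons a u' ih =>
    cases u' with
    | nil => simp [arcs_single]
    | cons b u'' =>
      rw [arcs_cons₂, List.cons_append, List.cons_append, arcs_cons₂, ← List.cons_append]
      exact Set.insert_subset_insert ih

lemma arcs_append_drop {u v : List V} {a b : V}
    (h : (a, b) ∈ arcsList (u ++ v)) (ha : a ∉ u) : (a, b) ∈ arcsList v := by
  induction u with
  | nil => simpa using h
  | cons x u' ih =>
    rw [List.cons_append] at h
    rcases h' : u' ++ v with _ | ⟨y, t⟩
    · rw [h', arcs_single] at h; exact absurd h (Set.notMem_empty _)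
    · rw [h', arcs_cons₂, ← h'] at h
      rcases h with h | h
      · simp only [Set.mem_singleton_iff, Prod.ext_iff] at h
        exact absurd (h.1 ▸ (List.mem_cons_self : x ∈ x :: u')) ha
      · exact ih h (fun hh => ha (List.mem_cons_of_mem _ hh))

lemma cons_of_arc_head {a b : V} {w' : List V} (hnd : (a :: w').Nodup)
    (h : (a, b) ∈ arcsList (a :: w')) : ∃ t, w' = b :: t := by
  cases w' with
  | nil => rw [arcs_single] at h; exact absurd h (Set.notMem_empty _)
  | cons c t =>
    rw [arcs_cons₂] at h
    rcases h with h | h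
    · simp only [Set.mem_singleton_iff, Prod.ext_iff] at h
      exact ⟨t, by rw [← h.2]⟩
    · have := mem_arcs_fst h
      simp only [List.mem_cons] at this
      simp only [List.nodup_cons, List.mem_cons] at hnd
      tauto

lemma exists_pred_of_mem_tail {a : V} {p : List V} (h : a ∈ p.tail) :
    ∃ u, (u, a) ∈ arcsList p := by
  induction p with
  | nil => simp at h
  | cons x t ih =>
    simp only [List.tail_cons] at h
    cases t with
    | nil => simp at h
    | cons c t' =>
      rcases List.mem_cons.mp h with rfl | h'
      · exact ⟨x, by rw [arcs_cons₂]; exact Set.mem_insert _ _⟩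
      · obtain ⟨u, hu⟩ := ih h'
        exact ⟨u, arcs_subset_cons x _ hu⟩

lemma prefix_of_arcs : ∀ (p : List V), p.Nodup → ∀ (w : List V), w.Nodup →
    arcsList p ⊆ arcsList w → p ≠ [] → p.head? = w.head? → ∃ w', w = p ++ w'
  | [], _, _, _, _, hne, _ => absurd rfl hne
  | [a], _, w, _, _, _, hh => by
    cases w with
    | nil => simp at hh
    | cons x t => exact ⟨t, by simp at hh; rw [hh]; rfl⟩
  | a :: b :: p', hp, w, hw, hsub, _, hh => by
    cases w with
    | nil => simp at hh
    | cons x w₀ =>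
      simp only [List.head?_cons, Option.some.injEq] at hh
      subst hh
      have hab : (a, b) ∈ arcsList (a :: w₀) := hsub (by rw [arcs_cons₂]; exact Set.mem_insert _ _)
      obtain ⟨w₁, rfl⟩ := cons_of_arc_head hw hab
      have ha : a ∉ b :: p' := by
        intro hmem
        simp only [List.mem_cons] at hmem
        simp only [List.nodup_cons, List.mem_cons] at hp
        tauto
      have hsub' : arcsList (b :: p') ⊆ arcsList (b :: w₁) := by
        rintro ⟨x, y⟩ hxy
        have hx : x ∈ b :: p' := mem_arcs_fst hxy
        have : (x, y) ∈ arcsList (a :: b :: w₁) := hsub (arcs_subset_cons a _ hxy)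
        exact arcs_append_drop (u := [a]) this (by simp; rintro rfl; exact ha hx)
      obtain ⟨w', hw'⟩ := prefix_of_arcs (b :: p') (List.Nodup.of_cons hp) (b :: w₁)
        (List.Nodup.of_cons hw) hsub' (by simp) rfl
      exact ⟨w', by rw [List.cons_append, ← hw']⟩


lemma arcs_subset_flatten {p : List V} {l : List (List V)} (h : p ∈ l) :
    arcsList p ⊆ arcsList l.flatten := by
  induction l with
  | nil => simp at h
  | cons q t ih =>
    rcases List.mem_cons.mp h with rfl | h'
    · exact (arcs_append_left p t.flatten).trans (by rw [List.flatten_cons])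
    · exact ((ih h').trans (arcs_append_right q t.flatten)).trans (by rw [List.flatten_cons])

end Aux


namespace Aux
variable {V : Type}

lemma eq_of_head?_eq {C : Set (List V)} (hC : IsPathCover V C) {p q : List V}
    (hp : p ∈ C) (hq : q ∈ C) (h : p.head? = q.head?) : p = q := by
  obtain ⟨a, t, rfl⟩ : ∃ a t, p = a :: t := by
    cases p with
    | nil => exact absurd rfl (hC.1 _ hp).1
    | cons a t => exact ⟨a, t, rfl⟩
  have haq : a ∈ q := by
    cases q with
    | nil => simp at h
    | cons b s => simp only [List.head?_cons, Option.some.injEq] at h; rw [h]; exact List.mem_cons_self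
  obtain ⟨r, _, hu⟩ := hC.2 a
  rw [hu _ ⟨hp, List.mem_cons_self⟩, hu _ ⟨hq, haq⟩]

lemma flatten_inj {C : Set (List V)} (hC : IsPathCover V C) :
    ∀ l₁ : List (List V), (∀ p ∈ l₁, p ∈ C) → ∀ l₂ : List (List V), (∀ p ∈ l₂, p ∈ C) →
    l₁.flatten = l₂.flatten → l₁ = l₂ := by
  intro l₁
  induction l₁ with
  | nil =>
    intro _ l₂ h₂ h
    cases l₂ with
    | nil => rfl
    | cons q t =>
      exfalso
      obtain ⟨v, hv⟩ := List.exists_mem_of_ne_nil q (hC.1 q (h₂ q (List.mem_cons_self))).1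
      have : v ∈ (List.nil (α := List V)).flatten := by
        rw [h, List.flatten_cons]; exact List.mem_append_left _ hv
      simp at this
  | cons p t₁ ih =>
    intro h₁ l₂ h₂ h
    cases l₂ with
    | nil =>
      exfalso
      obtain ⟨v, hv⟩ := List.exists_mem_of_ne_nil p (hC.1 p (h₁ p (List.mem_cons_self))).1
      have : v ∈ (List.nil (α := List V)).flatten := by
        rw [← h, List.flatten_cons]; exact List.mem_append_left _ hv
      simp at this
    | cons q t₂ =>
      rw [List.flatten_cons, List.flatten_cons] at h
      have hpC := h₁ p (List.mem_cons_self)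
      have hqC := h₂ q (List.mem_cons_self)
      have hhead : p.head? = q.head? := by
        obtain ⟨a, ta, rfl⟩ : ∃ a ta, p = a :: ta := by
          cases p with
          | nil => exact absurd rfl (hC.1 _ hpC).1
          | cons a ta => exact ⟨a, ta, rfl⟩
        obtain ⟨b, tb, rfl⟩ : ∃ b tb, q = b :: tb := by
          cases q with
          | nil => exact absurd rfl (hC.1 _ hqC).1
          | cons b tb => exact ⟨b, tb, rfl⟩
        have := congrArg List.head? h
        simpa using this
      have hpq : p = q := eq_of_head?_eq hC hpC hqC hhead
      subst hpq
      have := List.append_cancel_left h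
      rw [ih (fun r hr => h₁ r (List.mem_cons_of_mem _ hr)) t₂
        (fun r hr => h₂ r (List.mem_cons_of_mem _ hr)) this]

lemma exists_ordering : ∀ (n : ℕ) (w : List V), w.length ≤ n → w.Nodup →
    ∀ C' : Set (List V), (∀ p ∈ C', p ≠ [] ∧ p.Nodup) →
    (∀ v ∈ w, ∃! p, p ∈ C' ∧ v ∈ p) →
    (∀ p ∈ C', ∀ v ∈ p, v ∈ w) →
    arcsCover C' ⊆ arcsList w →
    ∃ l : List (List V), l.Nodup ∧ (∀ p, p ∈ l ↔ p ∈ C') ∧ l.flatten = w := by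
  intro n
  induction n with
  | zero =>
    intro w hlen _ C' hpaths _ hcont _
    have hw : w = [] := List.eq_nil_of_length_eq_zero (Nat.le_zero.mp hlen)
    subst hw
    refine ⟨[], List.nodup_nil, fun p => ⟨fun h => absurd h List.not_mem_nil, fun hp => ?_⟩, rfl⟩
    obtain ⟨v, hv⟩ := List.exists_mem_of_ne_nil p (hpaths p hp).1
    exact absurd (hcont p hp v hv) List.not_mem_nil
  | succ n ih =>
    intro w hlen hnd C' hpaths huniq hcont harcs
    cases w with
    | nil =>
      refine ⟨[], List.nodup_nil, fun p => ⟨fun h => absurd h List.not_mem_nil, fun hp => ?_⟩, rfl⟩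
      obtain ⟨v, hv⟩ := List.exists_mem_of_ne_nil p (hpaths p hp).1
      exact absurd (hcont p hp v hv) List.not_mem_nil
    | cons a w₀ =>
      obtain ⟨p, ⟨hpC, hap⟩, hpu⟩ := huniq a (List.mem_cons_self)
      have harcp : arcsList p ⊆ arcsList (a :: w₀) := by
        refine Set.Subset.trans ?_ harcs
        intro x hx
        exact Set.mem_iUnion.mpr ⟨p, Set.mem_iUnion.mpr ⟨hpC, hx⟩⟩
      have hhead : p.head? = some a := by
        obtain ⟨b, t, rfl⟩ : ∃ b t, p = b :: t := by
          cases p with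
          | nil => exact absurd rfl (hpaths _ hpC).1
          | cons b t => exact ⟨b, t, rfl⟩
        rcases List.mem_cons.mp hap with rfl | hat
        · rfl
        · exfalso
          obtain ⟨u, hu⟩ := exists_pred_of_mem_tail (p := b :: t) (by simpa using hat)
          have := mem_arcs_snd_tail (harcp hu)
          simp only [List.tail_cons] at this
          simp only [List.nodup_cons] at hnd
          exact hnd.1 this
      obtain ⟨w', hw'⟩ := prefix_of_arcs p (hpaths _ hpC).2 (a :: w₀) hnd harcp
        (hpaths _ hpC).1 (by rw [hhead]; rfl)
      rw [hw'] at hnd hlen huniq hcont harcs ⊢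
      have hpne : p ≠ [] := (hpaths _ hpC).1
      have hdisj : p.Disjoint w' := List.disjoint_of_nodup_append hnd
      have hlen' : w'.length ≤ n := by
        have h1 : p.length + w'.length ≤ n + 1 := by
          rw [← List.length_append]; exact hlen
        have h2 : 1 ≤ p.length := List.length_pos_iff.mpr hpne
        omega
      have hnotp : ∀ q ∈ C', q ≠ p → ∀ v ∈ q, v ∉ p := by
        intro q hqC hqp v hvq hvp
        obtain ⟨r, _, hru⟩ := huniq v (hcont q hqC v hvq)
        exact hqp ((hru q ⟨hqC, hvq⟩).trans (hru p ⟨hpC, hvp⟩).symm)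
      obtain ⟨l', hl'nd, hl'mem, hl'fl⟩ := ih w' hlen' (List.Nodup.of_append_right hnd)
        (C' \ {p})
        (fun q hq => hpaths q hq.1)
        (fun v hv => by
          obtain ⟨q, ⟨hqC, hvq⟩, hqu⟩ := huniq v (List.mem_append_right _ hv)
          have hqp : q ≠ p := by
            rintro rfl
            exact hdisj hvq hv
          exact ⟨q, ⟨⟨hqC, hqp⟩, hvq⟩, fun r ⟨⟨hrC, _⟩, hvr⟩ => hqu r ⟨hrC, hvr⟩⟩)
        (fun q hq v hv => by
          have := hcont q hq.1 v hv
          rcases List.mem_append.mp this with h | h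
          · exact absurd h (hnotp q hq.1 (by simpa using hq.2) v hv)
          · exact h)
        (fun x hx => by
          obtain ⟨q, hq⟩ := Set.mem_iUnion.mp hx
          obtain ⟨hqC, hxq⟩ := Set.mem_iUnion.mp hq
          obtain ⟨x1, x2⟩ := x
          have hx1 : x1 ∈ q := mem_arcs_fst hxq
          have hxw : (x1, x2) ∈ arcsList (p ++ w') :=
            harcs (Set.mem_iUnion.mpr ⟨q, Set.mem_iUnion.mpr ⟨hqC.1, hxq⟩⟩)
          exact arcs_append_drop hxw (hnotp q hqC.1 (by simpa using hqC.2) x1 hx1))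
      refine ⟨p :: l', ?_, ?_, ?_⟩
      · rw [List.nodup_cons]
        exact ⟨fun h => ((hl'mem p).mp h).2 rfl, hl'nd⟩
      · intro q
        rw [List.mem_cons, hl'mem]
        constructor
        · rintro (rfl | hq)
          · exact hpC
          · exact hq.1
        · intro hq
          by_cases hqp : q = p
          · exact Or.inl hqp
          · exact Or.inr ⟨hq, hqp⟩
      · rw [List.flatten_cons, hl'fl]

lemma ncard_orderings {α : Type} (S : Set α) (hS : S.Finite) :
    Set.ncard {l : List α | l.Nodup ∧ ∀ x, x ∈ l ↔ x ∈ S} = S.ncard.factorial := by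
  classical
  set l₀ : List α := hS.toFinset.toList with hl₀
  have hnd : l₀.Nodup := Finset.nodup_toList _
  have hmem : ∀ x, x ∈ l₀ ↔ x ∈ S := fun x => by
    rw [hl₀, Finset.mem_toList, Set.Finite.mem_toFinset]
  have hlen : l₀.length = S.ncard := by
    rw [hl₀, Finset.length_toList, Set.ncard_eq_toFinset_card S hS]
  have hset : {l : List α | l.Nodup ∧ ∀ x, x ∈ l ↔ x ∈ S} = ↑(l₀.permutations.toFinset) := by
    ext l
    simp only [Set.mem_setOf_eq, Finset.coe_sort_coe, Finset.mem_coe, List.mem_toFinset,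
      List.mem_permutations]
    constructor
    · rintro ⟨hlnd, hlm⟩
      exact (List.perm_ext_iff_of_nodup hlnd hnd).mpr (fun a => (hlm a).trans (hmem a).symm)
    · intro hperm
      exact ⟨hperm.nodup_iff.mpr hnd, fun a => (hperm.mem_iff).trans (hmem a)⟩
  rw [hset, Set.ncard_coe_finset, List.toFinset_card_of_nodup (List.nodup_permutations _ hnd),
    List.length_permutations, hlen]

end Aux


/-- **Proposition.** If `F = Arcs C` for a path cover `C` of `V`, then there are exactly
`|C|!` many `V`-listings `v` with `F ⊆ Arcs v`. -/
theorem count_listings_above_linear (V : Type) [Fintype V]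
    (F : Set (V × V)) (C : Set (List V)) (hC : IsPathCover V C) (hF : F = arcsCover C) :
    Set.ncard {w : List V | w.Nodup ∧ (∀ x : V, x ∈ w) ∧ F ⊆ arcsList w}
      = (Set.ncard C).factorial := by
  classical
  have hCfin : C.Finite := by
    have hinj : Set.InjOn (fun p : List V => p.head?) C := by
      intro p hp q hq h
      exact Aux.eq_of_head?_eq hC hp hq h
    exact Set.Finite.of_finite_image (Set.toFinite _) hinj
  set T : Set (List (List V)) := {l | l.Nodup ∧ ∀ p, p ∈ l ↔ p ∈ C} with hT
  have himg : {w : List V | w.Nodup ∧ (∀ x : V, x ∈ w) ∧ F ⊆ arcsList w}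
      = (fun l : List (List V) => l.flatten) '' T := by
    ext w
    simp only [Set.mem_setOf_eq, Set.mem_image, hT]
    constructor
    · rintro ⟨hwnd, hwall, hwF⟩
      obtain ⟨l, hlnd, hlm, hlf⟩ := Aux.exists_ordering w.length w le_rfl hwnd C hC.1
        (fun v _ => hC.2 v) (fun p _ v _ => hwall v) (hF ▸ hwF)
      exact ⟨l, ⟨hlnd, hlm⟩, hlf⟩
    · rintro ⟨l, ⟨hlnd, hlm⟩, rfl⟩
      refine ⟨?_, ?_, ?_⟩
      · rw [List.nodup_flatten]
        refine ⟨fun p hp => (hC.1 p ((hlm p).mp hp)).2, ?_⟩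
        refine List.Pairwise.imp_of_mem (fun {p q} hp hq hne => ?_) hlnd
        intro a hap haq
        obtain ⟨r, _, hru⟩ := hC.2 a
        exact hne ((hru p ⟨(hlm p).mp hp, hap⟩).trans (hru q ⟨(hlm q).mp hq, haq⟩).symm)
      · intro x
        obtain ⟨p, ⟨hpC, hxp⟩, _⟩ := hC.2 x
        exact List.mem_flatten.mpr ⟨p, (hlm p).mpr hpC, hxp⟩
      · rw [hF]
        intro x hx
        obtain ⟨p, hp⟩ := Set.mem_iUnion.mp hx
        obtain ⟨hpC, hxp⟩ := Set.mem_iUnion.mp hp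
        exact Aux.arcs_subset_flatten ((hlm p).mpr hpC) hxp
  rw [himg, Set.ncard_image_of_injOn (fun l₁ h₁ l₂ h₂ h =>
    Aux.flatten_inj hC l₁ (fun p hp => (h₁.2 p).mp hp) l₂ (fun p hp => (h₂.2 p).mp hp) h)]
  exact Aux.ncard_orderings C hCfin
end
end

section
/- Let V be a finite set and let F ⊆ V×V be such that F = Arcs C for some path cover C of V. Then the number of permutations σ of V satisfying F ⊆ A_σ equals |C|! (the factorial of the number of paths in C), where A_σ := {(v,σ(v)) : v ∈ V}. -/
open scoped Classical

noncomputable section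

lemma arcsList_cons₂ {V : Type} (a b : V) (t : List V) :
    arcsList (a :: b :: t) = insert (a, b) (arcsList (b :: t)) := by
  ext ⟨x, y⟩
  simp [arcsList]

lemma arcsList_nil {V : Type} (a : V) : arcsList [a] = ∅ := by
  ext ⟨x, y⟩; simp [arcsList]

lemma fst_mem_of_mem_arcsList {V : Type} {p : List V} {a b : V}
    (h : (a, b) ∈ arcsList p) : a ∈ p := (List.of_mem_zip h).1

lemma snd_mem_tail_of_mem_arcsList {V : Type} {p : List V} {a b : V}
    (h : (a, b) ∈ arcsList p) : b ∈ p.tail := (List.of_mem_zip h).2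

lemma snd_mem_of_mem_arcsList {V : Type} {p : List V} {a b : V}
    (h : (a, b) ∈ arcsList p) : b ∈ p :=
  List.mem_of_mem_tail (snd_mem_tail_of_mem_arcsList h)

lemma arcsList_functional {V : Type} {p : List V} (hp : p.Nodup) :
    ∀ {a b c : V}, (a, b) ∈ arcsList p → (a, c) ∈ arcsList p → b = c := by
  induction p with
  | nil => intro a b c h _; simp [arcsList] at h
  | cons x t ih =>
    intro a b c h1 h2
    match t with
    | [] => simp [arcsList_nil] at h1
    | y :: t' =>
      rw [arcsList_cons₂] at h1 h2
      rcases h1 with h1 | h1 <;> rcases h2 with h2 | h2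
      · rw [Prod.ext_iff] at h1 h2
        exact h1.2.trans h2.2.symm
      · exfalso
        obtain ⟨rfl, rfl⟩ := Prod.mk.injEq .. ▸ Prod.ext_iff.mp h1
        exact (List.nodup_cons.mp hp).1 (fst_mem_of_mem_arcsList h2)
      · exfalso
        obtain ⟨rfl, rfl⟩ := Prod.ext_iff.mp h2
        exact (List.nodup_cons.mp hp).1 (fst_mem_of_mem_arcsList h1)
      · exact ih hp.of_cons h1 h2

lemma arcsList_injective {V : Type} {p : List V} (hp : p.Nodup) :
    ∀ {a b c : V}, (a, c) ∈ arcsList p → (b, c) ∈ arcsList p → a = b := by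
  induction p with
  | nil => intro a b c h _; simp [arcsList] at h
  | cons x t ih =>
    intro a b c h1 h2
    match t with
    | [] => simp [arcsList_nil] at h1
    | y :: t' =>
      rw [arcsList_cons₂] at h1 h2
      rcases h1 with h1 | h1 <;> rcases h2 with h2 | h2
      · rw [Prod.ext_iff] at h1 h2
        exact h1.1.trans h2.1.symm
      · exfalso
        obtain ⟨rfl, rfl⟩ := Prod.ext_iff.mp h1
        exact (List.nodup_cons.mp hp.of_cons).1 (snd_mem_tail_of_mem_arcsList h2)
      · exfalso
        obtain ⟨rfl, rfl⟩ := Prod.ext_iff.mp h2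
        exact (List.nodup_cons.mp hp.of_cons).1 (snd_mem_tail_of_mem_arcsList h1)
      · exact ih hp.of_cons h1 h2

lemma arcsList_fst_ne_getLast {V : Type} {p : List V} (hp : p.Nodup) {a b : V}
    (h : (a, b) ∈ arcsList p) (hne : p ≠ []) : a ≠ p.getLast hne := by
  induction p with
  | nil => simp [arcsList] at h
  | cons x t ih =>
    match t with
    | [] => simp [arcsList_nil] at h
    | y :: t' =>
      rw [arcsList_cons₂] at h
      rw [List.getLast_cons (by simp)]
      rcases h with h | h
      · obtain ⟨rfl, rfl⟩ := Prod.ext_iff.mp h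
        intro hc
        exact (List.nodup_cons.mp hp).1 (hc ▸ List.getLast_mem _)
      · exact ih hp.of_cons h (by simp)

lemma exists_arc_of_ne_getLast {V : Type} {p : List V} {a : V} (ha : a ∈ p)
    (hne : p ≠ []) (h : a ≠ p.getLast hne) : ∃ b, (a, b) ∈ arcsList p := by
  induction p with
  | nil => simp at ha
  | cons x t ih =>
    match t with
    | [] =>
      simp at ha
      simp [List.getLast] at h
      exact absurd ha h
    | y :: t' =>
      rw [List.getLast_cons (by simp)] at h
      rcases List.mem_cons.mp ha with rfl | ha
      · exact ⟨y, by rw [arcsList_cons₂]; exact Or.inl rfl⟩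
      · obtain ⟨b, hb⟩ := ih ha (by simp) h
        exact ⟨b, by rw [arcsList_cons₂]; exact Or.inr hb⟩

lemma count_extensions {V : Type} [Fintype V] (D : Set V) (f : V → V)
    (hf : Set.InjOn f D) :
    Set.ncard {σ : Equiv.Perm V | ∀ a ∈ D, σ a = f a} = (Set.ncard Dᶜ).factorial := by
  classical
  set R : Set V := f '' D with hR
  have hDR : Set.ncard D = Set.ncard R := (Set.ncard_image_of_injOn hf).symm
  have hcomp : Set.ncard Dᶜ = Set.ncard Rᶜ := by
    have h1 := Set.ncard_add_ncard_compl D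
    have h2 := Set.ncard_add_ncard_compl R
    omega
  have hcardD : Fintype.card ↥Dᶜ = Fintype.card ↥Rᶜ := by
    rw [← Nat.card_coe_set_eq, ← Nat.card_coe_set_eq,
      Nat.card_eq_fintype_card, Nat.card_eq_fintype_card] at hcomp
    exact hcomp
  -- the map Φ from extensions to bijections Dᶜ ≃ Rᶜ
  have key : ∀ σ : Equiv.Perm V, (∀ a ∈ D, σ a = f a) → ∀ v : V, v ∈ Dᶜ → σ v ∈ Rᶜ := by
    intro σ hσ v hv
    intro hvR
    obtain ⟨a, ha, hfa⟩ := hvR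
    rw [← hσ a ha] at hfa
    exact hv (σ.injective hfa ▸ ha)
  set Φ : {σ : Equiv.Perm V // ∀ a ∈ D, σ a = f a} → (↥Dᶜ ≃ ↥Rᶜ) := fun σ =>
    Equiv.ofBijective (fun v => (⟨σ.1 v.1, key σ.1 σ.2 v.1 v.2⟩ : ↥Rᶜ))
      (by
        rw [Fintype.bijective_iff_injective_and_card]
        refine ⟨fun u v huv => ?_, hcardD⟩
        exact Subtype.ext (σ.1.injective (congrArg Subtype.val huv))) with hΦ
  have hinj : Function.Injective Φ := by
    intro σ τ h
    ext v
    by_cases hv : v ∈ D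
    · rw [σ.2 v hv, τ.2 v hv]
    · have := congrArg (fun e => (e ⟨v, hv⟩ : ↥Rᶜ).1) h
      simpa [hΦ] using this
  have hsurj : Function.Surjective Φ := by
    intro e
    set g : V → V := fun v => if h : v ∈ D then f v else (e ⟨v, h⟩).1 with hg
    have hginj : Function.Injective g := by
      intro u v huv
      simp only [hg] at huv
      by_cases hu : u ∈ D <;> by_cases hv : v ∈ D
      · rw [dif_pos hu, dif_pos hv] at huv; exact hf hu hv huv
      · rw [dif_pos hu, dif_neg hv] at huv
        exact absurd (huv ▸ Set.mem_image_of_mem f hu) (e ⟨v, hv⟩).2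
      · rw [dif_neg hu, dif_pos hv] at huv
        exact absurd (huv ▸ Set.mem_image_of_mem f hv) (e ⟨u, hu⟩).2
      · rw [dif_neg hu, dif_neg hv] at huv
        exact congrArg Subtype.val (e.injective (Subtype.ext huv))
    set σ : Equiv.Perm V := Equiv.ofBijective g (Finite.injective_iff_bijective.mp hginj)
      with hσ
    have hσval : ∀ v, σ v = g v := fun v => rfl
    refine ⟨⟨σ, fun a ha => by rw [hσval, hg]; exact dif_pos ha⟩, ?_⟩
    ext v
    simp only [hΦ, Equiv.ofBijective_apply, hσval, hg]
    rw [dif_neg v.2]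
  have : Nat.card {σ : Equiv.Perm V // ∀ a ∈ D, σ a = f a} = Nat.card (↥Dᶜ ≃ ↥Rᶜ) :=
    Nat.card_congr (Equiv.ofBijective Φ ⟨hinj, hsurj⟩)
  have hset : Set.ncard {σ : Equiv.Perm V | ∀ a ∈ D, σ a = f a}
      = Nat.card {σ : Equiv.Perm V // ∀ a ∈ D, σ a = f a} := by
    rw [← Nat.card_coe_set_eq]
    rfl
  rw [hset, this, Nat.card_eq_fintype_card,
    Fintype.card_equiv (Fintype.equivOfCardEq hcardD),
    ← Nat.card_eq_fintype_card, Nat.card_coe_set_eq]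

section Cover
variable {V : Type} {C : Set (List V)} (hC : IsPathCover V C)

lemma mem_arcsCover {a b : V} :
    (a, b) ∈ arcsCover C ↔ ∃ p ∈ C, (a, b) ∈ arcsList p := by
  simp [arcsCover]

include hC in
lemma cover_path_eq {p q : List V} (hp : p ∈ C) (hq : q ∈ C) {v : V}
    (hvp : v ∈ p) (hvq : v ∈ q) : p = q := by
  obtain ⟨r, -, hu⟩ := hC.2 v
  rw [hu p ⟨hp, hvp⟩, hu q ⟨hq, hvq⟩]

include hC in
lemma cover_functional {a b c : V} (h1 : (a, b) ∈ arcsCover C)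
    (h2 : (a, c) ∈ arcsCover C) : b = c := by
  obtain ⟨p, hp, h1⟩ := mem_arcsCover.mp h1
  obtain ⟨q, hq, h2⟩ := mem_arcsCover.mp h2
  have := cover_path_eq hC hp hq (fst_mem_of_mem_arcsList h1) (fst_mem_of_mem_arcsList h2)
  subst this
  exact arcsList_functional (hC.1 p hp).2 h1 h2

include hC in
lemma cover_injective {a b c : V} (h1 : (a, c) ∈ arcsCover C)
    (h2 : (b, c) ∈ arcsCover C) : a = b := by
  obtain ⟨p, hp, h1⟩ := mem_arcsCover.mp h1
  obtain ⟨q, hq, h2⟩ := mem_arcsCover.mp h2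
  have := cover_path_eq hC hp hq (snd_mem_of_mem_arcsList h1) (snd_mem_of_mem_arcsList h2)
  subst this
  exact arcsList_injective (hC.1 p hp).2 h1 h2

include hC in
lemma cover_ends :
    Set.ncard {a : V | ¬ ∃ b, (a, b) ∈ arcsCover C} = Set.ncard C := by
  set E : Set V := {a : V | ¬ ∃ b, (a, b) ∈ arcsCover C} with hE
  have hmem : ∀ (p : List V) (hp : p ∈ C), p.getLast (hC.1 p hp).1 ∈ E := by
    intro p hp
    rw [hE]
    rintro ⟨b, hb⟩
    obtain ⟨q, hq, hb2⟩ := mem_arcsCover.mp hb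
    have heq : q = p := cover_path_eq hC hq hp (fst_mem_of_mem_arcsList hb2)
      (List.getLast_mem _)
    subst heq
    exact arcsList_fst_ne_getLast (hC.1 q hq).2 hb2 (hC.1 q hq).1 rfl
  set g : ↥C → ↥E := fun p => ⟨p.1.getLast (hC.1 p.1 p.2).1, hmem p.1 p.2⟩ with hg
  have hginj : Function.Injective g := by
    rintro ⟨p, hp⟩ ⟨q, hq⟩ h
    have hval : p.getLast (hC.1 p hp).1 = q.getLast (hC.1 q hq).1 :=
      congrArg Subtype.val h
    refine Subtype.ext (cover_path_eq hC hp hq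
      (v := p.getLast (hC.1 p hp).1) (List.getLast_mem _) ?_)
    rw [hval]; exact List.getLast_mem _
  have hgsurj : Function.Surjective g := by
    rintro ⟨v, hv⟩
    obtain ⟨p, ⟨hp, hvp⟩, -⟩ := hC.2 v
    refine ⟨⟨p, hp⟩, Subtype.ext ?_⟩
    show p.getLast _ = v
    by_contra hne
    exact hv (Exists.imp (fun b hb => mem_arcsCover.mpr ⟨p, hp, hb⟩)
      (exists_arc_of_ne_getLast hvp (hC.1 p hp).1 (Ne.symm hne)))
  rw [← Nat.card_coe_set_eq, ← Nat.card_coe_set_eq]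
  exact (Nat.card_congr (Equiv.ofBijective g ⟨hginj, hgsurj⟩)).symm

end Cover

/-- **Proposition.** If `F = Arcs C` for a path cover `C` of `V`, then there are exactly
`|C|!` many permutations `σ` of `V` with `F ⊆ A_σ`. -/
theorem count_perms_above_linear (V : Type) [Fintype V]
    (F : Set (V × V)) (C : Set (List V)) (hC : IsPathCover V C) (hF : F = arcsCover C) :
    Set.ncard {σ : Equiv.Perm V | F ⊆ ApermSet σ} = (Set.ncard C).factorial := by
  classical
  subst hF
  set F : Set (V × V) := arcsCover C with hF
  set D : Set V := {a : V | ∃ b, (a, b) ∈ F} with hD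
  set f : V → V := fun a => if h : ∃ b, (a, b) ∈ F then h.choose else a with hf
  have hfspec : ∀ a ∈ D, (a, f a) ∈ F := by
    intro a ha
    have ha' : ∃ b, (a, b) ∈ F := ha
    show (a, if h : ∃ b, (a, b) ∈ F then h.choose else a) ∈ F
    rw [dif_pos ha']
    exact ha'.choose_spec
  have hfinj : Set.InjOn f D := by
    intro a ha b hb h
    exact cover_injective hC (hfspec a ha) (h ▸ hfspec b hb)
  have hsetchar : {σ : Equiv.Perm V | F ⊆ ApermSet σ} =
      {σ : Equiv.Perm V | ∀ a ∈ D, σ a = f a} := by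
    ext σ
    simp only [Set.mem_setOf_eq]
    constructor
    · intro hσ a ha
      obtain ⟨v, hv⟩ := hσ (hfspec a ha)
      obtain ⟨h1, h2⟩ := Prod.ext_iff.mp hv
      dsimp at h1 h2
      subst h1
      exact h2
    · rintro hσ ⟨a, b⟩ hab
      have ha : a ∈ D := ⟨b, hab⟩
      have hb : b = f a := cover_functional hC hab (hfspec a ha)
      exact ⟨a, by dsimp; rw [hσ a ha, hb]⟩
  rw [hsetchar, count_extensions D f hfinj]
  congr 1
  rw [← cover_ends hC]
  congr 1
end
end

section
/- Let D=(V,A) be a digraph with n=|V| and f: V → ℙ a map to the positive integers. Then ∑_{σ} ∑_{F} (−1)^{|F|} equals the number of (f,D)-friendly V-listings, where the outer sum ranges over all permutations σ of V with f∘σ = f, and the inner sum ranges over all linear subsets F of A_σ ∩ A. -/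
open scoped Classical

noncomputable section

namespace RB
variable {V : Type}

lemma arcs_nil : arcsList ([] : List V) = ∅ := by
  ext ⟨u, v⟩; simp [arcsList]

lemma arcs_single (a : V) : arcsList [a] = ∅ := by
  ext ⟨u, v⟩; simp [arcsList]

lemma arcs_cons_cons (a b : V) (l : List V) :
    arcsList (a :: b :: l) = insert (a, b) (arcsList (b :: l)) := by
  ext ⟨u, v⟩; simp [arcsList]

lemma mem_arcs_iff {u v : V} {w : List V} :
    (u, v) ∈ arcsList w ↔ ∃ l r, w = l ++ u :: v :: r := by
  constructor
  · intro h
    induction w with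
    | nil => simp [arcs_nil] at h
    | cons a t ih =>
      match t, h with
      | b :: t, h =>
        rw [arcs_cons_cons] at h
        rcases Set.mem_insert_iff.1 h with h | h
        · exact ⟨[], t, by simp at h; simp [h.1, h.2]⟩
        · obtain ⟨l, r, hl⟩ := ih h
          exact ⟨a :: l, r, by simp [hl]⟩
  · rintro ⟨l, r, rfl⟩
    induction l with
    | nil => rw [List.nil_append, arcs_cons_cons]; exact Set.mem_insert _ _
    | cons a t ih =>
      rw [List.cons_append]
      rcases hm : t ++ u :: v :: r with _ | ⟨b, s⟩
      · simp at hm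
      · rw [arcs_cons_cons]; exact Set.mem_insert_iff.2 (Or.inr (hm ▸ ih))

lemma arcs_cons_subset (a : V) (l : List V) : arcsList l ⊆ arcsList (a :: l) := by
  rintro ⟨u, v⟩ h
  obtain ⟨x, r, rfl⟩ := mem_arcs_iff.1 h
  exact mem_arcs_iff.2 ⟨a :: x, r, rfl⟩

lemma arcs_append_cons (x : List V) (a : V) (y : List V) :
    arcsList (x ++ a :: y) = arcsList (x ++ [a]) ∪ arcsList (a :: y) := by
  induction x with
  | nil => simp [arcs_single]
  | cons c t ih =>
    match t with
    | [] =>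
      cases y with
      | nil => simp [arcs_single, arcs_cons_cons, arcs_nil]
      | cons d y => simp only [List.nil_append, List.cons_append, arcs_cons_cons] at *
                    rw [arcs_single]; ext p; simp; tauto
    | d :: t =>
      simp only [List.cons_append] at *
      rw [arcs_cons_cons, arcs_cons_cons, ih]
      ext p; simp; tauto

lemma splitu {a : V} : ∀ {l₁ l₂ r₁ r₂ : List V}, l₁ ++ a :: r₁ = l₂ ++ a :: r₂ →
    a ∉ l₁ → a ∉ l₂ → l₁ = l₂ ∧ r₁ = r₂ := by
  intro l₁
  induction l₁ with
  | nil =>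
    intro l₂ r₁ r₂ h h1 h2
    cases l₂ with
    | nil => simpa using h
    | cons b t =>
      rw [List.nil_append] at h
      injection h with ha hb
      exact absurd (by rw [ha]; exact List.mem_cons_self) h2
  | cons b t ih =>
    intro l₂ r₁ r₂ h h1 h2
    cases l₂ with
    | nil =>
      rw [List.nil_append] at h
      injection h with ha hb
      exact absurd (by rw [← ha]; exact List.mem_cons_self) h1
    | cons c s =>
      simp only [List.cons_append, List.cons.injEq] at h
      obtain ⟨rfl, h⟩ := h
      obtain ⟨rfl, rfl⟩ := ih h (fun hm => h1 (List.mem_cons_of_mem _ hm))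
        (fun hm => h2 (List.mem_cons_of_mem _ hm))
      exact ⟨rfl, rfl⟩

lemma not_mem_left_of_nodup {w l r : List V} {a : V} (hn : w.Nodup) (hw : w = l ++ a :: r) :
    a ∉ l ∧ a ∉ r := by
  subst hw
  rw [List.nodup_append] at hn
  obtain ⟨-, hn2, hd⟩ := hn
  exact ⟨fun h => hd _ h _ List.mem_cons_self rfl, fun h => (List.nodup_cons.1 hn2).1 h⟩

lemma arcs_functional {w : List V} (hn : w.Nodup) {u v v' : V}
    (h : (u, v) ∈ arcsList w) (h' : (u, v') ∈ arcsList w) : v = v' := by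
  obtain ⟨l, r, hw⟩ := mem_arcs_iff.1 h
  obtain ⟨l', r', hw'⟩ := mem_arcs_iff.1 h'
  have h1 := (not_mem_left_of_nodup hn hw).1
  have h2 := (not_mem_left_of_nodup hn hw').1
  obtain ⟨-, h⟩ := splitu (hw ▸ hw') h1 h2
  exact (List.cons.injEq _ _ _ _ ▸ h).1

lemma arcs_injective {w : List V} (hn : w.Nodup) {u u' v : V}
    (h : (u, v) ∈ arcsList w) (h' : (u', v) ∈ arcsList w) : u = u' := by
  obtain ⟨l, r, hw⟩ := mem_arcs_iff.1 h
  obtain ⟨l', r', hw'⟩ := mem_arcs_iff.1 h'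
  have e1 : w = (l ++ [u]) ++ v :: r := by simp [hw]
  have e2 : w = (l' ++ [u']) ++ v :: r' := by simp [hw']
  have h1 := (not_mem_left_of_nodup hn e1).1
  have h2 := (not_mem_left_of_nodup hn e2).1
  obtain ⟨h, -⟩ := splitu (e1 ▸ e2) h1 h2
  have := (List.append_inj' h rfl).2
  simpa using this

lemma arcs_ne {w : List V} (hn : w.Nodup) {u v : V} (h : (u, v) ∈ arcsList w) : u ≠ v := by
  obtain ⟨l, r, hw⟩ := mem_arcs_iff.1 h
  rintro rfl
  exact (not_mem_left_of_nodup hn (by simpa using hw : w = (l ++ [u]) ++ u :: r)).1 (by simp)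

end RB
namespace RB
variable {V : Type}

def chop (F : Set (V × V)) : List V → List (List V)
  | [] => []
  | [a] => [[a]]
  | a :: b :: l =>
    if (a, b) ∈ F then
      match chop F (b :: l) with
      | [] => [[a]]
      | q :: qs => (a :: q) :: qs
    else [a] :: chop F (b :: l)

lemma chop_struct (F : Set (V × V)) (b : V) (l : List V) :
    ∃ q qs, chop F (b :: l) = (b :: q) :: qs := by
  induction l generalizing b with
  | nil => exact ⟨[], [], rfl⟩
  | cons c l ih =>
    obtain ⟨q, qs, hq⟩ := ih c
    by_cases h : (b, c) ∈ F
    · refine ⟨c :: q, qs, ?_⟩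
      simp only [chop, if_pos h, hq]
    · exact ⟨[], chop F (c :: l), by simp only [chop, if_neg h]⟩

lemma chop_flatten (F : Set (V × V)) : ∀ w : List V, (chop F w).flatten = w
  | [] => rfl
  | [a] => rfl
  | a :: b :: l => by
    obtain ⟨q, qs, hq⟩ := chop_struct F b l
    have ih := chop_flatten F (b :: l)
    rw [hq] at ih
    by_cases h : (a, b) ∈ F
    · simp only [chop, if_pos h, hq]
      simp only [List.flatten_cons] at ih ⊢
      simp [ih]
    · simp only [chop, if_neg h, hq]
      simp only [List.flatten_cons] at ih ⊢
      simp [ih]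

lemma chop_ne_nil (F : Set (V × V)) : ∀ w : List V, ∀ p ∈ chop F w, p ≠ [] := by
  intro w
  induction w with
  | nil => simp [chop]
  | cons a l ih =>
    cases l with
    | nil => simp [chop]
    | cons b l =>
      obtain ⟨q, qs, hq⟩ := chop_struct F b l
      by_cases h : (a, b) ∈ F
      · simp only [chop, if_pos h, hq]
        rintro p hp
        rcases List.mem_cons.1 hp with rfl | hp
        · simp
        · exact ih p (hq ▸ List.mem_cons_of_mem _ hp)
      · simp only [chop, if_neg h]
        rintro p hp
        rcases List.mem_cons.1 hp with rfl | hp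
        · simp
        · exact ih p hp

lemma chop_arcs_subset (F : Set (V × V)) : ∀ w : List V, ∀ p ∈ chop F w,
    arcsList p ⊆ arcsList w ∩ F := by
  intro w
  induction w with
  | nil => simp [chop]
  | cons a l ih =>
    cases l with
    | nil => simp [chop, arcs_single]
    | cons b l =>
      obtain ⟨q, qs, hq⟩ := chop_struct F b l
      by_cases h : (a, b) ∈ F
      · simp only [chop, if_pos h, hq]
        intro p hp
        rcases List.mem_cons.1 hp with rfl | hp
        · rw [arcs_cons_cons]
          intro x hx
          rcases Set.mem_insert_iff.1 hx with rfl | hx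
          · exact ⟨by rw [arcs_cons_cons]; exact Set.mem_insert _ _, h⟩
          · have := ih (b :: q) (hq ▸ List.mem_cons_self) hx
            exact ⟨arcs_cons_subset a _ this.1, this.2⟩
        · intro x hx
          have := ih p (hq ▸ List.mem_cons_of_mem _ hp) hx
          exact ⟨arcs_cons_subset a _ this.1, this.2⟩
      · simp only [chop, if_neg h]
        intro p hp
        rcases List.mem_cons.1 hp with rfl | hp
        · simp [arcs_single]
        · intro x hx
          have := ih p hp hx
          exact ⟨arcs_cons_subset a _ this.1, this.2⟩

lemma chop_arcs_cover (F : Set (V × V)) : ∀ w : List V, ∀ u v : V,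
    (u, v) ∈ F → (u, v) ∈ arcsList w → ∃ p ∈ chop F w, (u, v) ∈ arcsList p := by
  intro w
  induction w with
  | nil => simp [arcs_nil]
  | cons a l ih =>
    cases l with
    | nil => simp [arcs_single]
    | cons b l =>
      intro u v hF harc
      obtain ⟨q, qs, hq⟩ := chop_struct F b l
      rw [arcs_cons_cons] at harc
      rcases Set.mem_insert_iff.1 harc with heq | harc
      · refine ⟨a :: b :: q, ?_, ?_⟩
        · simp only [chop, if_pos (heq ▸ hF), hq]; simp
        · rw [arcs_cons_cons]; exact Set.mem_insert_iff.2 (Or.inl heq)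
      · obtain ⟨p, hp, hap⟩ := ih u v hF harc
        by_cases h : (a, b) ∈ F
        · rw [hq] at hp
          rcases List.mem_cons.1 hp with rfl | hp
          · refine ⟨a :: b :: q, ?_, arcs_cons_subset a _ hap⟩
            simp only [chop, if_pos h, hq]; simp
          · refine ⟨p, ?_, hap⟩
            simp only [chop, if_pos h, hq]
            exact List.mem_cons_of_mem _ hp
        · exact ⟨p, by simp only [chop, if_neg h]; exact List.mem_cons_of_mem _ hp, hap⟩

theorem linear_of_subset_arcs {w : List V} {F : Set (V × V)} (hn : w.Nodup)
    (hfull : ∀ x : V, x ∈ w) (hF : F ⊆ arcsList w) : IsLinear V F := by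
  refine ⟨{p | p ∈ chop F w}, ⟨?_, ?_⟩, ?_⟩
  · intro p hp
    refine ⟨chop_ne_nil F w p hp, ?_⟩
    have : p <:+: w := chop_flatten F w ▸ List.infix_of_mem_flatten hp
    exact hn.sublist this.sublist
  · intro v
    have hv : v ∈ (chop F w).flatten := (chop_flatten F w).symm ▸ hfull v
    obtain ⟨p, hp, hvp⟩ := List.mem_flatten.1 hv
    refine ⟨p, ⟨hp, hvp⟩, ?_⟩
    rintro p' ⟨hp', hvp'⟩
    by_contra hne
    have hnj : (chop F w).flatten.Nodup := (chop_flatten F w).symm ▸ hn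
    have hpw := List.nodup_flatten.1 hnj
    haveI : Std.Symm (List.Disjoint (α := V)) := ⟨fun _ _ h => h.symm⟩
    have hdisj := hpw.2.forall hp' hp (Ne.intro hne)
    exact hdisj hvp' hvp
  · apply Set.Subset.antisymm
    · intro x hx
      obtain ⟨u, v⟩ := x
      obtain ⟨p, hp, hap⟩ := chop_arcs_cover F w u v hx (hF hx)
      exact Set.mem_biUnion hp hap
    · intro x hx
      simp only [arcsCover, Set.mem_iUnion] at hx
      obtain ⟨p, hp, hap⟩ := hx
      exact (chop_arcs_subset F w p hp hap).2

end RB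
namespace RB
variable {V : Type}

lemma arcs_infix {p w : List V} (h : p <:+: w) : arcsList p ⊆ arcsList w := by
  obtain ⟨s, t, rfl⟩ := h
  rintro ⟨u, v⟩ hx
  obtain ⟨l, r, rfl⟩ := mem_arcs_iff.1 hx
  exact mem_arcs_iff.2 ⟨s ++ l, r ++ t, by simp⟩

theorem exists_listing_of_linear [Fintype V] {F : Set (V × V)} (h : IsLinear V F) :
    ∃ w : List V, w.Nodup ∧ (∀ x : V, x ∈ w) ∧ F ⊆ arcsList w := by
  obtain ⟨C, ⟨hpaths, hcover⟩, rfl⟩ := h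
  have hfin : C.Finite := by
    apply Set.Finite.subset (List.finite_length_le V (Fintype.card V))
    intro l hl
    exact ((hpaths l hl).2).length_le_card
  set L := hfin.toFinset.toList with hL
  have hmemL : ∀ p, p ∈ L ↔ p ∈ C := by
    intro p; rw [hL, Finset.mem_toList, Set.Finite.mem_toFinset]
  refine ⟨L.flatten, ?_, ?_, ?_⟩
  · rw [List.nodup_flatten]
    constructor
    · intro l hl; exact (hpaths l ((hmemL l).1 hl)).2
    · apply (Finset.nodup_toList _).pairwise_of_forall_ne
      intro p hp q hq hne
      intro x hxp hxq
      obtain ⟨r, -, hr⟩ := hcover x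
      exact hne ((hr p ⟨(hmemL p).1 hp, hxp⟩).trans (hr q ⟨(hmemL q).1 hq, hxq⟩).symm)
  · intro x
    obtain ⟨p, ⟨hpC, hxp⟩, -⟩ := hcover x
    exact List.mem_flatten.2 ⟨p, (hmemL p).2 hpC, hxp⟩
  · intro x hx
    simp only [arcsCover, Set.mem_iUnion] at hx
    obtain ⟨p, hp, hap⟩ := hx
    exact arcs_infix (List.infix_of_mem_flatten ((hmemL p).2 hp)) hap

end RB
namespace RB
variable {V : Type} [Fintype V] [DecidableEq V]

lemma subset_aperm_iff {F : Set (V × V)} {σ : Equiv.Perm V} :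
    F ⊆ ApermSet σ ↔ ∀ p ∈ F, σ p.1 = p.2 := by
  constructor
  · intro h p hp
    obtain ⟨x, hx⟩ := h hp
    rw [← hx]
  · intro h p hp
    exact ⟨p.1, by ext <;> simp [h p hp]⟩

theorem core_base (f : V → ℕ+) (U : Finset V) :
    Nat.card {σ : Equiv.Perm V // (∀ v ∉ U, σ v = v) ∧ f ∘ ⇑σ = f}
      = Nat.card {w : List V // w.Nodup ∧ (∀ x, x ∈ w ↔ x ∈ U) ∧
          w.Chain' (fun p q => f p ≤ f q)} := by
  haveI : IsTotal V (fun a b => f a ≤ f b) := ⟨fun a b => le_total (f a) (f b)⟩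
  haveI : IsTrans V (fun a b => f a ≤ f b) := ⟨fun a b c h1 h2 => le_trans h1 h2⟩
  set w0 : List V := List.insertionSort (fun a b => f a ≤ f b) U.toList with hw0
  have hperm : w0.Perm U.toList := List.perm_insertionSort _ _
  have hn0 : w0.Nodup := hperm.nodup_iff.2 (Finset.nodup_toList U)
  have hmem0 : ∀ x, x ∈ w0 ↔ x ∈ U := fun x =>
    (hperm.mem_iff).trans (Finset.mem_toList)
  have hsort : List.Pairwise (fun a b => f a ≤ f b) w0 := List.pairwise_insertionSort _ _
  have hchain0 : w0.Chain' (fun p q => f p ≤ f q) := List.isChain_iff_pairwise.2 hsort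
  -- facts about σ in the subtype
  have hUstab : ∀ (σ : Equiv.Perm V), (∀ v ∉ U, σ v = v) → ∀ v, σ v ∈ U ↔ v ∈ U := by
    intro σ hfix v
    constructor
    · intro h
      by_contra hv
      rw [hfix v hv] at h
      exact hv h
    · intro h
      by_contra hσv
      have := hfix (σ v) hσv
      have : σ v = v := σ.injective this
      rw [this] at hσv
      exact hσv h
  refine Nat.card_eq_of_bijective
    (fun σ => ⟨w0.map σ.1, ?_, ?_, ?_⟩) ⟨?_, ?_⟩
  · exact hn0.map σ.1.injective
  · intro x
    constructor
    · intro hx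
      obtain ⟨y, hy, rfl⟩ := List.mem_map.1 hx
      exact (hUstab σ.1 σ.2.1 y).2 ((hmem0 y).1 hy)
    · intro hx
      refine List.mem_map.2 ⟨σ.1.symm x, (hmem0 _).2 ?_, by simp⟩
      have := (hUstab σ.1 σ.2.1 (σ.1.symm x))
      rw [Equiv.apply_symm_apply] at this
      exact this.1 hx
  · rw [List.Chain', List.isChain_map]
    have : ∀ p q, f (σ.1 p) ≤ f (σ.1 q) ↔ f p ≤ f q := by
      intro p q
      rw [show f (σ.1 p) = f p from congrFun σ.2.2 p,
          show f (σ.1 q) = f q from congrFun σ.2.2 q]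
    exact List.IsChain.imp (fun p q h => (this p q).2 h) hchain0
  · -- injective
    rintro ⟨σ, hσ⟩ ⟨τ, hτ⟩ h
    have h' : w0.map σ = w0.map τ := congrArg Subtype.val h
    have := List.map_inj_left.1 h'
    ext v
    by_cases hv : v ∈ U
    · exact this v ((hmem0 v).2 hv)
    · rw [hσ.1 v hv, hτ.1 v hv]
  · -- surjective
    rintro ⟨w, hwn, hwm, hwc⟩
    have hperm' : w.Perm w0 := (List.perm_ext_iff_of_nodup hwn hn0).2
      (fun x => (hwm x).trans (hmem0 x).symm)
    have hlen : w0.length = w.length := hperm'.length_eq.symm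
    have hmapf : w.map f = w0.map f := by
      refine List.Perm.eq_of_pairwise' (r := (· ≤ · : ℕ+ → ℕ+ → Prop)) ?_ ?_ (hperm'.map f)
      · exact List.isChain_iff_pairwise.1 ((List.isChain_map f).2 hwc)
      · exact List.isChain_iff_pairwise.1 ((List.isChain_map f).2 hchain0)
    set g : V → V := fun v => if hv : v ∈ U then
        w.get ⟨w0.idxOf v, by rw [← hlen]; exact List.idxOf_lt_length_iff.2 ((hmem0 v).2 hv)⟩
      else v with hg
    have hgU : ∀ v (hv : v ∈ U), g v =
        w.get ⟨w0.idxOf v, by rw [← hlen]; exact List.idxOf_lt_length_iff.2 ((hmem0 v).2 hv)⟩ := by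
      intro v hv; rw [hg]; simp [hv]
    have hgnU : ∀ v, v ∉ U → g v = v := by
      intro v hv; rw [hg]; simp [hv]
    have hgmem : ∀ v, v ∈ U → g v ∈ U := by
      intro v hv
      rw [hgU v hv]
      exact (hwm _).1 (List.get_mem _ _)
    have hginj : Function.Injective g := by
      intro x y hxy
      by_cases hx : x ∈ U <;> by_cases hy : y ∈ U
      · rw [hgU x hx, hgU y hy] at hxy
        have h2 := (hwn.get_inj_iff).1 hxy
        have h3 : w0.idxOf x = w0.idxOf y := by
          simpa using congrArg Fin.val h2
        have hx0 : x ∈ w0 := (hmem0 x).2 hx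
        have hy0 : y ∈ w0 := (hmem0 y).2 hy
        rw [← List.idxOf_get (List.idxOf_lt_length_iff.2 hx0),
            ← List.idxOf_get (List.idxOf_lt_length_iff.2 hy0)]
        congr 1
        exact Fin.ext h3
      · exact absurd (hgnU y hy ▸ hxy ▸ hgmem x hx) hy
      · exact absurd ((hgnU x hx).symm ▸ hxy ▸ hgmem y hy) hx
      · rw [hgnU x hx, hgnU y hy] at hxy; exact hxy
    have hgsurj : Function.Surjective g := by
      intro x
      by_cases hx : x ∈ U
      · have hxw : x ∈ w := (hwm x).2 hx
        have hlt : w.idxOf x < w.length := List.idxOf_lt_length_iff.2 hxw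
        have hlt0 : w.idxOf x < w0.length := by rw [hlen]; exact hlt
        refine ⟨w0.get ⟨w.idxOf x, hlt0⟩, ?_⟩
        have hmem' : w0.get ⟨w.idxOf x, hlt0⟩ ∈ U := (hmem0 _).1 (List.get_mem _ _)
        rw [hgU _ hmem']
        have : w0.idxOf (w0.get ⟨w.idxOf x, hlt0⟩) = w.idxOf x :=
          List.get_idxOf hn0 _
        simp only [this]
        exact List.idxOf_get hlt
      · exact ⟨x, hgnU x hx⟩
    set σ : Equiv.Perm V := Equiv.ofBijective g ⟨hginj, hgsurj⟩ with hσ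
    have hσg : ∀ v, σ v = g v := fun v => rfl
    have hfix : ∀ v ∉ U, σ v = v := fun v hv => (hσg v).trans (hgnU v hv)
    have hfσ : f ∘ ⇑σ = f := by
      funext v
      by_cases hv : v ∈ U
      · have hv0 : v ∈ w0 := (hmem0 v).2 hv
        have hlt0 : w0.idxOf v < w0.length := List.idxOf_lt_length_iff.2 hv0
        have hlt : w0.idxOf v < w.length := by rw [← hlen]; exact hlt0
        have hltm : w0.idxOf v < (w.map f).length := by simpa using hlt
        calc f (σ v) = f (w[w0.idxOf v]'hlt) := by
              rw [hσg, hgU v hv]; rfl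
        _ = (w.map f)[w0.idxOf v]'hltm := (List.getElem_map f).symm
        _ = (w0.map f)[w0.idxOf v]'(by simpa using hlt0) := List.getElem_of_eq hmapf _
        _ = f (w0[w0.idxOf v]'hlt0) := List.getElem_map f
        _ = f v := by rw [List.getElem_idxOf]
      · rw [Function.comp_apply, hfix v hv]
    refine ⟨⟨σ, hfix, hfσ⟩, ?_⟩
    apply Subtype.ext
    show w0.map σ = w
    apply List.ext_get (by simp [hlen])
    intro i h1 h2
    simp only [List.get_eq_getElem, List.getElem_map]
    show σ (w0.get ⟨i, by simpa using h1⟩) = w.get ⟨i, h2⟩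
    rw [hσg]
    have hmem' : w0.get ⟨i, by simpa using h1⟩ ∈ U := (hmem0 _).1 (List.get_mem _ _)
    rw [hgU _ hmem']
    congr 1
    apply Fin.ext
    simp only
    exact List.get_idxOf hn0 _

end RB
namespace RB
variable {V : Type}

lemma arcs_prefix_subset (l : List V) (a : V) (r : List V) :
    arcsList (l ++ [a]) ⊆ arcsList (l ++ a :: r) :=
  arcs_infix ⟨[], r, by simp⟩

lemma arcs_suffix_subset (l : List V) (a : V) (r : List V) :
    arcsList r ⊆ arcsList (l ++ a :: r) :=
  arcs_infix ⟨l ++ [a], [], by simp⟩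

lemma mem_arcs_middle_cases {l r : List V} {a : V} {u v : V}
    (h : (u, v) ∈ arcsList (l ++ a :: r)) (hu : u ≠ a) :
    (u, v) ∈ arcsList (l ++ [a]) ∨ (u, v) ∈ arcsList r := by
  rw [arcs_append_cons] at h
  rcases h with h | h
  · exact Or.inl h
  · cases r with
    | nil => rw [arcs_single] at h; exact absurd h (Set.notMem_empty _)
    | cons c r' =>
      rw [arcs_cons_cons] at h
      rcases Set.mem_insert_iff.1 h with h | h
      · exact absurd (congrArg Prod.fst h) hu
      · exact Or.inr h

lemma reduced_arcs {l r : List V} {a b : V} {u v : V}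
    (h : (u, v) ∈ arcsList (l ++ a :: b :: r)) (hu1 : u ≠ a) (hu2 : u ≠ b) :
    (u, v) ∈ arcsList (l ++ a :: r) := by
  rcases mem_arcs_middle_cases h hu1 with h | h
  · exact arcs_prefix_subset l a r h
  · have h' : (u, v) ∈ arcsList ([] ++ b :: r) := by simpa using h
    rcases mem_arcs_middle_cases h' hu2 with h'' | h''
    · rw [List.nil_append, arcs_single] at h''
      exact absurd h'' (Set.notMem_empty _)
    · exact arcs_suffix_subset l a r h''

lemma expand_arcs {l r : List V} {a b : V} {u v : V}
    (h : (u, v) ∈ arcsList (l ++ a :: r)) (hu : u ≠ a) :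
    (u, v) ∈ arcsList (l ++ a :: b :: r) := by
  rcases mem_arcs_middle_cases h hu with h | h
  · exact arcs_prefix_subset l a (b :: r) h
  · have := arcs_suffix_subset (l ++ [a]) b r h
    rwa [show (l ++ [a]) ++ b :: r = l ++ a :: b :: r by simp] at this

lemma succ_of_arc {l r : List V} {a c : V} (hn : (l ++ a :: r).Nodup)
    (h : (a, c) ∈ arcsList (l ++ a :: r)) : ∃ r', r = c :: r' := by
  obtain ⟨l₂, r₂, heq⟩ := mem_arcs_iff.1 h
  have ha1 : a ∉ l := (not_mem_left_of_nodup hn rfl).1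
  have ha2 : a ∉ l₂ := (not_mem_left_of_nodup hn (by rw [heq])).1
  obtain ⟨-, hr⟩ := splitu heq ha1 ha2
  exact ⟨r₂, by rw [hr]⟩

end RB
namespace RB
variable {V : Type} [Fintype V] [DecidableEq V]

set_option maxHeartbeats 1000000 in
theorem core (f : V → ℕ+) : ∀ (n : ℕ) (U : Finset V) (F : Set (V × V)),
    F.ncard = n →
    (∃ w0 : List V, w0.Nodup ∧ (∀ x, x ∈ w0 ↔ x ∈ U) ∧ F ⊆ arcsList w0) →
    (∀ p ∈ F, f p.1 = f p.2) →
    Nat.card {σ : Equiv.Perm V // (∀ v ∉ U, σ v = v) ∧ f ∘ ⇑σ = f ∧ F ⊆ ApermSet σ}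
      = Nat.card {w : List V // w.Nodup ∧ (∀ x, x ∈ w ↔ x ∈ U) ∧
          w.Chain' (fun p q => f p ≤ f q) ∧ F ⊆ arcsList w} := by
  intro n
  induction n using Nat.strong_induction_on with
  | _ n IH =>
  intro U F hcard hw0ex hlc
  rcases Set.eq_empty_or_nonempty F with rfl | ⟨⟨a, b⟩, hab⟩
  · have e1 : {σ : Equiv.Perm V // (∀ v ∉ U, σ v = v) ∧ f ∘ ⇑σ = f ∧
        (∅ : Set (V × V)) ⊆ ApermSet σ} ≃
        {σ : Equiv.Perm V // (∀ v ∉ U, σ v = v) ∧ f ∘ ⇑σ = f} :=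
      Equiv.subtypeEquivRight fun σ => by simp
    have e2 : {w : List V // w.Nodup ∧ (∀ x, x ∈ w ↔ x ∈ U) ∧
        w.Chain' (fun p q => f p ≤ f q) ∧ (∅ : Set (V × V)) ⊆ arcsList w} ≃
        {w : List V // w.Nodup ∧ (∀ x, x ∈ w ↔ x ∈ U) ∧
        w.Chain' (fun p q => f p ≤ f q)} :=
      Equiv.subtypeEquivRight fun w => by simp
    rw [Nat.card_congr e1, Nat.card_congr e2]
    exact core_base f U
  -- inductive step
  obtain ⟨w0, hn0, hm0, hF0⟩ := hw0ex
  have habarc : (a, b) ∈ arcsList w0 := hF0 hab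
  obtain ⟨l0, r0, hw0eq⟩ := mem_arcs_iff.1 habarc
  have hane : a ≠ b := arcs_ne hn0 habarc
  have haU : a ∈ U := (hm0 a).1 (by rw [hw0eq]; simp)
  have hbU : b ∈ U := (hm0 b).1 (by rw [hw0eq]; simp)
  have hfab : f a = f b := hlc (a, b) hab
  have hfun : ∀ {u v v'}, (u, v) ∈ F → (u, v') ∈ F → v = v' :=
    fun h h' => arcs_functional hn0 (hF0 h) (hF0 h')
  have hinj : ∀ {u u' v}, (u, v) ∈ F → (u', v) ∈ F → u = u' :=
    fun h h' => arcs_injective hn0 (hF0 h) (hF0 h')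
  set Fd : Set (V × V) :=
    {p | (p ∈ F ∧ p.1 ≠ a ∧ p.1 ≠ b) ∨ ((b, p.2) ∈ F ∧ p.1 = a)} with hFddef
  have hvb : ∀ {u v}, (u, v) ∈ F → u ≠ a → v ≠ b :=
    fun h hu hv => hu (hinj (hv ▸ h) hab)
  -- Fd cardinality
  have hFdcard : Fd.ncard < n := by
    have himg : Fd = (fun p : V × V => if p.1 = b then (a, p.2) else p) '' (F \ {(a, b)}) := by
      ext ⟨u, v⟩
      constructor
      · rintro (⟨hF, hu1, hu2⟩ | ⟨hbv, hu⟩)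
        · exact ⟨(u, v), ⟨hF, by simp; intro h; exact absurd h hu1⟩, by simp [hu2]⟩
        · have hu' : u = a := hu
          refine ⟨(b, v), ⟨hbv, by simp [Ne.symm hane]⟩, by simp [hu']⟩
      · rintro ⟨⟨u', v'⟩, ⟨hF', hne'⟩, himg⟩
        have hu'a : u' ≠ a := by
          rintro rfl
          exact hne' (by rw [hfun hF' hab]; exact rfl)
        by_cases hu'b : u' = b
        · subst hu'b
          simp only [if_pos rfl] at himg
          obtain ⟨rfl, rfl⟩ : a = u ∧ v' = v := by
            exact ⟨congrArg Prod.fst himg, congrArg Prod.snd himg⟩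
          exact Or.inr ⟨hF', rfl⟩
        · simp only [if_neg hu'b] at himg
          obtain ⟨rfl, rfl⟩ : u' = u ∧ v' = v :=
            ⟨congrArg Prod.fst himg, congrArg Prod.snd himg⟩
          exact Or.inl ⟨hF', hu'a, hu'b⟩
    have hinjon : Set.InjOn (fun p : V × V => if p.1 = b then (a, p.2) else p) (F \ {(a, b)}) := by
      have ev1 : ∀ v : V, (fun p : V × V => if p.1 = b then (a, p.2) else p) (b, v) = (a, v) :=
        fun v => if_pos rfl
      have ev2 : ∀ (u v : V), u ≠ b →
          (fun p : V × V => if p.1 = b then (a, p.2) else p) (u, v) = (u, v) :=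
        fun u v h => if_neg h
      rintro ⟨u, v⟩ ⟨hu, hune⟩ ⟨u', v'⟩ ⟨hu', hune'⟩ heq
      have hua : u ≠ a := by
        rintro rfl
        exact hune (by rw [hfun hu hab]; exact rfl)
      have hua' : u' ≠ a := by
        rintro rfl
        exact hune' (by rw [hfun hu' hab]; exact rfl)
      by_cases h1 : u = b <;> by_cases h2 : u' = b
      · subst h1; subst h2
        rw [ev1, ev1] at heq
        have : v = v' := congrArg Prod.snd heq
        rw [this]
      · subst h1
        rw [ev1, ev2 u' v' h2] at heq
        exact absurd (congrArg Prod.fst heq).symm hua'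
      · subst h2
        rw [ev2 u v h1, ev1] at heq
        exact absurd (congrArg Prod.fst heq) hua
      · rw [ev2 u v h1, ev2 u' v' h2] at heq
        exact heq
    rw [himg, Set.ncard_image_of_injOn hinjon, ← hcard]
    exact Set.ncard_diff_singleton_lt_of_mem hab (Set.toFinite F)
  have hFdlc : ∀ p ∈ Fd, f p.1 = f p.2 := by
    rintro ⟨u, v⟩ (⟨hF, -, -⟩ | ⟨hbv, hu⟩)
    · exact hlc _ hF
    · show f u = f v
      rw [show u = a from hu, hfab]
      exact hlc _ hbv
  -- transport of arcs to the erased list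
  have key : ∀ (w l r : List V), w.Nodup → w = l ++ a :: b :: r → F ⊆ arcsList w →
      Fd ⊆ arcsList (l ++ a :: r) := by
    rintro w l r hn hw hFw ⟨u, v⟩ hp
    rcases hp with ⟨hFp, hu1, hu2⟩ | ⟨hbv, hu⟩
    · exact reduced_arcs (hw ▸ hFw hFp) hu1 hu2
    · show (u, v) ∈ arcsList (l ++ a :: r)
      have hbarc : (b, v) ∈ arcsList ((l ++ [a]) ++ b :: r) := by
        rw [show (l ++ [a]) ++ b :: r = l ++ a :: b :: r by simp, ← hw]
        exact hFw hbv
      have hnn : ((l ++ [a]) ++ b :: r).Nodup := by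
        rw [show (l ++ [a]) ++ b :: r = l ++ a :: b :: r by simp, ← hw]; exact hn
      obtain ⟨r', rfl⟩ := succ_of_arc hnn hbarc
      rw [show u = a from hu]
      exact mem_arcs_iff.2 ⟨l, r', rfl⟩
  have key2 : ∀ (w l r : List V), w.Nodup → w = l ++ a :: b :: r →
      ((l ++ a :: r).Nodup ∧ ∀ x, x ∈ l ++ a :: r ↔ x ∈ w ∧ x ≠ b) := by
    intro w l r hn hw
    have hsub : (l ++ a :: r).Sublist w := by
      rw [hw]; exact ((List.sublist_cons_self b r).cons₂ a).append_left l
    have hbl : b ∉ l ++ [a] ∧ b ∉ r :=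
      not_mem_left_of_nodup hn (by rw [hw]; simp)
    refine ⟨hn.sublist hsub, fun x => ?_⟩
    constructor
    · intro hx
      refine ⟨hsub.mem hx, ?_⟩
      rintro rfl
      simp only [List.mem_append, List.mem_cons] at hx
      rcases hx with h | h | h
      · exact hbl.1 (List.mem_append_left _ h)
      · exact hane h.symm
      · exact hbl.2 h
    · rintro ⟨hx, hxb⟩
      rw [hw] at hx
      simp only [List.mem_append, List.mem_cons] at hx ⊢
      rcases hx with h | h | h | h
      · exact Or.inl h
      · exact Or.inr (Or.inl h)
      · exact absurd h hxb
      · exact Or.inr (Or.inr h)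
  have key3 : ∀ (l r : List V), List.Chain' (fun p q => f p ≤ f q) (l ++ a :: b :: r) →
      List.Chain' (fun p q => f p ≤ f q) (l ++ a :: r) := by
    intro l r hc
    rw [List.Chain', List.isChain_append] at hc ⊢
    refine ⟨hc.1, ?_, by simpa using hc.2.2⟩
    have h2 := hc.2.1
    cases r with
    | nil => simp
    | cons c r' =>
      rw [List.isChain_cons_cons, List.isChain_cons_cons] at h2
      rw [List.isChain_cons_cons]
      exact ⟨le_trans h2.1 h2.2.1, h2.2.2⟩
  have key4 : ∀ (l r : List V), List.Chain' (fun p q => f p ≤ f q) (l ++ a :: r) →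
      List.Chain' (fun p q => f p ≤ f q) (l ++ a :: b :: r) := by
    intro l r hc
    rw [List.Chain', List.isChain_append] at hc ⊢
    refine ⟨hc.1, ?_, by simpa using hc.2.2⟩
    have h2 := hc.2.1
    rw [List.isChain_cons_cons]
    refine ⟨le_of_eq hfab, ?_⟩
    cases r with
    | nil => simp
    | cons c r' =>
      rw [List.isChain_cons_cons] at h2 ⊢
      exact ⟨le_trans (le_of_eq hfab.symm) h2.1, h2.2⟩
  have herase : ∀ (w : List V), w.Nodup → ∀ l r, w = l ++ a :: b :: r →
      w.erase b = l ++ a :: r := by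
    intro w hn l r hw
    have hshape : (l ++ [a]) ++ b :: r = l ++ a :: b :: r := by
      rw [List.append_assoc]; rfl
    have hbl : b ∉ l ++ [a] :=
      (not_mem_left_of_nodup hn (by rw [hw, ← hshape])).1
    rw [hw, ← hshape]
    rw [List.erase_append_right _ hbl, List.erase_cons_head]
    simp
  -- sigma side
  have hσeq : Nat.card {σ : Equiv.Perm V // (∀ v ∉ U, σ v = v) ∧ f ∘ ⇑σ = f ∧ F ⊆ ApermSet σ}
      = Nat.card {σ : Equiv.Perm V // (∀ v ∉ U.erase b, σ v = v) ∧ f ∘ ⇑σ = f ∧ Fd ⊆ ApermSet σ} := by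
    refine Nat.card_congr (Equiv.subtypeEquiv (Equiv.mulRight (Equiv.swap a b)) fun σ => ?_)
    simp only [Equiv.coe_mulRight]
    constructor
    · rintro ⟨h1, h2, h3⟩
      rw [subset_aperm_iff] at h3
      refine ⟨?_, ?_, ?_⟩
      · intro v hv
        by_cases hvb' : v = b
        · rw [Equiv.Perm.mul_apply, hvb', Equiv.swap_apply_right]
          exact h3 (a, b) hab
        · have hvU : v ∉ U := fun h => hv (Finset.mem_erase.2 ⟨hvb', h⟩)
          have hva : v ≠ a := fun h => hvU (h ▸ haU)
          rw [Equiv.Perm.mul_apply, Equiv.swap_apply_of_ne_of_ne hva hvb']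
          exact h1 v hvU
      · funext v
        have hswap : f ((Equiv.swap a b) v) = f v := by
          rcases eq_or_ne v a with rfl | hva
          · rw [Equiv.swap_apply_left]; exact hfab.symm
          rcases eq_or_ne v b with rfl | hvb'
          · rw [Equiv.swap_apply_right]; exact hfab
          · rw [Equiv.swap_apply_of_ne_of_ne hva hvb']
        calc f ((σ * Equiv.swap a b) v) = f (σ ((Equiv.swap a b) v)) := by
              rw [Equiv.Perm.mul_apply]
        _ = f ((Equiv.swap a b) v) := congrFun h2 _
        _ = f v := hswap
      · rw [subset_aperm_iff]
        rintro ⟨u, v⟩ hp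
        rcases hp with ⟨hFp, hu1, hu2⟩ | ⟨hbv, hu⟩
        · show (σ * Equiv.swap a b) u = v
          rw [Equiv.Perm.mul_apply, Equiv.swap_apply_of_ne_of_ne hu1 hu2]
          exact h3 _ hFp
        · show (σ * Equiv.swap a b) u = v
          rw [show u = a from hu, Equiv.Perm.mul_apply, Equiv.swap_apply_left]
          exact h3 _ hbv
    · rintro ⟨g1, g2, g3⟩
      rw [subset_aperm_iff] at g3
      have hσv : ∀ v, σ v = (σ * Equiv.swap a b) ((Equiv.swap a b) v) := by
        intro v
        rw [Equiv.Perm.mul_apply, Equiv.swap_apply_self]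
      have hbfix : (σ * Equiv.swap a b) b = b :=
        g1 b (fun h => (Finset.mem_erase.1 h).1 rfl)
      refine ⟨?_, ?_, ?_⟩
      · intro v hv
        have hva : v ≠ a := fun h => hv (h ▸ haU)
        have hvb' : v ≠ b := fun h => hv (h ▸ hbU)
        rw [hσv v, Equiv.swap_apply_of_ne_of_ne hva hvb']
        exact g1 v (fun h => hv (Finset.mem_of_mem_erase h))
      · funext v
        have hswap : f ((Equiv.swap a b) v) = f v := by
          rcases eq_or_ne v a with rfl | hva
          · rw [Equiv.swap_apply_left]; exact hfab.symm
          rcases eq_or_ne v b with rfl | hvb'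
          · rw [Equiv.swap_apply_right]; exact hfab
          · rw [Equiv.swap_apply_of_ne_of_ne hva hvb']
        calc f (σ v) = f ((σ * Equiv.swap a b) ((Equiv.swap a b) v)) := by rw [← hσv]
        _ = f ((Equiv.swap a b) v) := congrFun g2 _
        _ = f v := hswap
      · rw [subset_aperm_iff]
        rintro ⟨u, v⟩ hp
        show σ u = v
        rcases eq_or_ne u a with hua | hua
        · have hpa : (a, v) ∈ F := by rw [← hua]; exact hp
          have hvb2 : v = b := hfun hpa hab
          rw [hua, hvb2, hσv a, Equiv.swap_apply_left]
          exact hbfix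
        rcases eq_or_ne u b with hub | hub
        · rw [hub, hσv b, Equiv.swap_apply_right]
          exact g3 (a, v) (Or.inr ⟨by rw [← hub]; exact hp, rfl⟩)
        · rw [hσv u, Equiv.swap_apply_of_ne_of_ne hua hub]
          exact g3 (u, v) (Or.inl ⟨hp, hua, hub⟩)
  -- list side
  have hweq : Nat.card {w : List V // w.Nodup ∧ (∀ x, x ∈ w ↔ x ∈ U) ∧
        w.Chain' (fun p q => f p ≤ f q) ∧ F ⊆ arcsList w}
      = Nat.card {w : List V // w.Nodup ∧ (∀ x, x ∈ w ↔ x ∈ U.erase b) ∧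
        w.Chain' (fun p q => f p ≤ f q) ∧ Fd ⊆ arcsList w} := by
    have hdecomp : ∀ (w : List V), F ⊆ arcsList w → ∃ l r, w = l ++ a :: b :: r :=
      fun w hFw => mem_arcs_iff.1 (hFw hab)
    refine Nat.card_eq_of_bijective (fun w => ⟨w.1.erase b, ?_, ?_, ?_, ?_⟩) ⟨?_, ?_⟩
    · obtain ⟨l, r, hw⟩ := hdecomp w.1 w.2.2.2.2
      rw [herase w.1 w.2.1 l r hw]
      exact (key2 w.1 l r w.2.1 hw).1
    · obtain ⟨l, r, hw⟩ := hdecomp w.1 w.2.2.2.2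
      rw [herase w.1 w.2.1 l r hw]
      intro x
      rw [(key2 w.1 l r w.2.1 hw).2 x, Finset.mem_erase, w.2.2.1 x, and_comm]
    · obtain ⟨l, r, hw⟩ := hdecomp w.1 w.2.2.2.2
      rw [herase w.1 w.2.1 l r hw]
      exact key3 l r (hw ▸ w.2.2.2.1)
    · obtain ⟨l, r, hw⟩ := hdecomp w.1 w.2.2.2.2
      rw [herase w.1 w.2.1 l r hw]
      exact key w.1 l r w.2.1 hw w.2.2.2.2
    · -- injective
      rintro ⟨w1, hw1⟩ ⟨w2, hw2⟩ heq
      have heq' : w1.erase b = w2.erase b := congrArg Subtype.val heq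
      obtain ⟨l1, r1, he1⟩ := hdecomp w1 hw1.2.2.2
      obtain ⟨l2, r2, he2⟩ := hdecomp w2 hw2.2.2.2
      rw [herase w1 hw1.1 l1 r1 he1, herase w2 hw2.1 l2 r2 he2] at heq'
      have ha1 : a ∉ l1 := (not_mem_left_of_nodup hw1.1 he1).1
      have ha2 : a ∉ l2 := (not_mem_left_of_nodup hw2.1 he2).1
      obtain ⟨rfl, rfl⟩ := splitu heq' ha1 ha2
      apply Subtype.ext
      show w1 = w2
      rw [he1, he2]
    · -- surjective
      rintro ⟨w', hn', hm', hc', hFd'⟩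
      have haw' : a ∈ w' := (hm' a).2 (Finset.mem_erase.2 ⟨hane, haU⟩)
      have hbw' : b ∉ w' := fun h => (Finset.mem_erase.1 ((hm' b).1 h)).1 rfl
      obtain ⟨l, r, hw'⟩ := List.append_of_mem haw'
      subst hw'
      set w : List V := l ++ a :: b :: r with hwdef
      have hnl : l.Nodup := (List.nodup_append.1 hn').1
      have hnar : (a :: r).Nodup := (List.nodup_append.1 hn').2.1
      have hdisj : l.Disjoint (a :: r) := List.disjoint_of_nodup_append hn'
      have hnw : w.Nodup := by
        rw [hwdef, List.nodup_append]
        refine ⟨hnl, ?_, ?_⟩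
        · rw [List.nodup_cons] at hnar ⊢
          refine ⟨?_, ?_⟩
          · intro h
            rcases List.mem_cons.1 h with h | h
            · exact hane h
            · exact hnar.1 h
          · rw [List.nodup_cons]
            exact ⟨fun h => hbw' (List.mem_append_right l (List.mem_cons_of_mem a h)), hnar.2⟩
        · rintro x hxl y hx rfl
          rcases List.mem_cons.1 hx with rfl | hx
          · exact hdisj hxl List.mem_cons_self
          rcases List.mem_cons.1 hx with rfl | hx
          · exact hbw' (List.mem_append_left (a :: r) hxl)
          · exact hdisj hxl (List.mem_cons_of_mem a hx)
      have hmw : ∀ x, x ∈ w ↔ x ∈ U := by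
        intro x
        rw [hwdef]
        simp only [List.mem_append, List.mem_cons]
        constructor
        · rintro (h | h | h | h)
          · exact Finset.mem_of_mem_erase ((hm' x).1 (List.mem_append_left _ h))
          · exact h ▸ haU
          · exact h ▸ hbU
          · exact Finset.mem_of_mem_erase ((hm' x).1
              (List.mem_append_right _ (List.mem_cons_of_mem a h)))
        · intro hx
          by_cases hxb : x = b
          · exact Or.inr (Or.inr (Or.inl hxb))
          · have : x ∈ l ++ a :: r := (hm' x).2 (Finset.mem_erase.2 ⟨hxb, hx⟩)
            simp only [List.mem_append, List.mem_cons] at this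
            tauto
      have hcw : w.Chain' (fun p q => f p ≤ f q) := key4 l r hc'
      have hFw : F ⊆ arcsList w := by
        rintro ⟨u, v⟩ hp
        rcases eq_or_ne u a with hua | hua
        · have hpa : (a, v) ∈ F := by rw [← hua]; exact hp
          have hvb2 : v = b := hfun hpa hab
          rw [hua, hvb2]
          exact mem_arcs_iff.2 ⟨l, r, rfl⟩
        rcases eq_or_ne u b with hub | hub
        · have hpb : (b, v) ∈ F := by rw [← hub]; exact hp
          have hav : (a, v) ∈ arcsList (l ++ a :: r) := hFd' (Or.inr ⟨hpb, rfl⟩)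
          obtain ⟨r', hr'⟩ := succ_of_arc hn' hav
          rw [hub]
          rw [hwdef, hr']
          exact mem_arcs_iff.2 ⟨l ++ [a], r', by simp⟩
        · exact expand_arcs (hFd' (Or.inl ⟨hp, hua, hub⟩)) hua
      refine ⟨⟨w, hnw, hmw, hcw, hFw⟩, ?_⟩
      apply Subtype.ext
      exact herase w hnw l r rfl
  -- combine
  rw [hσeq, hweq]
  exact IH Fd.ncard hFdcard (U.erase b) Fd rfl
    ⟨l0 ++ a :: r0, (key2 w0 l0 r0 hn0 hw0eq).1,
      fun x => by rw [(key2 w0 l0 r0 hn0 hw0eq).2 x, hm0 x, Finset.mem_erase, and_comm],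
      key w0 l0 r0 hn0 hw0eq hF0⟩ hFdlc

end RB
namespace RB
variable {V : Type}

lemma chain'_of_mem_arcs {R : V → V → Prop} {w : List V} (h : List.Chain' R w)
    {u v : V} (ha : (u, v) ∈ arcsList w) : R u v := by
  obtain ⟨l, r, rfl⟩ := mem_arcs_iff.1 ha
  have h2 := (List.isChain_append.1 h).2.1
  exact (List.isChain_cons_cons.1 h2).1

lemma chain'_mono_arcs {R S : V → V → Prop} : ∀ {w : List V}, List.Chain' R w →
    (∀ u v, (u, v) ∈ arcsList w → R u v → S u v) → List.Chain' S w
  | [], _, _ => List.isChain_nil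
  | [a], _, _ => List.isChain_singleton a
  | a :: b :: t, h, h2 => by
    rw [List.Chain', List.isChain_cons_cons] at h ⊢
    refine ⟨h2 a b (by rw [arcs_cons_cons]; exact Set.mem_insert _ _) h.1, ?_⟩
    exact chain'_mono_arcs h.2
      (fun u v hm hr => h2 u v (by rw [arcs_cons_cons]; exact Set.mem_insert_iff.2 (Or.inr hm)) hr)

end RB

set_option maxHeartbeats 1000000 in
/-- **Lemma (counting (f,D)-friendly listings).** For `f : V → ℙ`,
`∑_{σ : f∘σ = f} ∑_{F ⊆ A_σ ∩ A linear} (-1)^{|F|}` equals the number of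
`(f, D)`-friendly `V`-listings, i.e. the `V`-listings `(v_1, …, v_n)` with
`f(v_1) ≤ ⋯ ≤ f(v_n)` and `f(v_p) < f(v_{p+1})` whenever `(v_p, v_{p+1}) ∈ A`. -/
theorem friendly_listings_count (V : Type) [Fintype V] [DecidableEq V]
    (A : Set (V × V)) (f : V → ℕ+) :
    ∑ σ ∈ Finset.univ.filter (fun σ : Equiv.Perm V => f ∘ ⇑σ = f),
      ∑ F ∈ Finset.univ.filter
          (fun F : Finset (V × V) =>
            (↑F : Set (V × V)) ⊆ ApermSet σ ∩ A ∧ IsLinear V (↑F : Set (V × V))),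
        (-1 : ℤ) ^ F.card
      = (Set.ncard {w : List V | w.Nodup ∧ (∀ x : V, x ∈ w) ∧
          w.Chain' fun a b => f a ≤ f b ∧ ((a, b) ∈ A → f a < f b)} : ℤ) := by
  classical
  have hWfin : {w : List V | w.Nodup ∧ (∀ x : V, x ∈ w) ∧
      w.Chain' (fun p q => f p ≤ f q)}.Finite := by
    apply Set.Finite.subset (List.finite_length_le V (Fintype.card V))
    intro w hw
    exact hw.1.length_le_card
  set FW : Finset (List V) := hWfin.toFinset with hFWdef
  have hFWmem : ∀ w, w ∈ FW ↔ (w.Nodup ∧ (∀ x : V, x ∈ w) ∧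
      w.Chain' (fun p q => f p ≤ f q)) := fun w => Set.Finite.mem_toFinset _
  set Bad : List V → Finset (V × V) := fun w =>
    Finset.univ.filter (fun p => p ∈ arcsList w ∧ p ∈ A ∧ f p.1 = f p.2) with hBaddef
  have hBadmem : ∀ w (p : V × V), p ∈ Bad w ↔
      (p ∈ arcsList w ∧ p ∈ A ∧ f p.1 = f p.2) := by
    intro w p
    rw [hBaddef]
    simp
  -- rewrite the friendly set as a filtered finset
  have hfr : {w : List V | w.Nodup ∧ (∀ x : V, x ∈ w) ∧
      w.Chain' fun a b => f a ≤ f b ∧ ((a, b) ∈ A → f a < f b)}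
      = ↑(FW.filter (fun w => Bad w = ∅)) := by
    ext w
    simp only [Set.mem_setOf_eq, Finset.coe_filter, Set.mem_setOf_eq, hFWmem]
    constructor
    · rintro ⟨h1, h2, h3⟩
      refine ⟨⟨h1, h2, h3.imp (fun a b hpq => hpq.1)⟩, ?_⟩
      rw [Finset.eq_empty_iff_forall_notMem]
      rintro ⟨u, v⟩ hp
      rw [hBadmem] at hp
      obtain ⟨harc, hA', heqf⟩ := hp
      have hr := RB.chain'_of_mem_arcs h3 harc
      exact absurd (hr.2 hA') (by rw [heqf]; exact lt_irrefl _)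
    · rintro ⟨⟨h1, h2, hch⟩, hbad⟩
      refine ⟨h1, h2, ?_⟩
      refine RB.chain'_mono_arcs hch ?_
      intro u v harc hle
      refine ⟨hle, fun hA' => ?_⟩
      rcases lt_or_eq_of_le hle with h | h
      · exact h
      · exfalso
        have hmem : (u, v) ∈ Bad w := (hBadmem _ _).2 ⟨harc, hA', h⟩
        rw [hbad] at hmem
        exact absurd hmem (Finset.notMem_empty _)
  rw [hfr, Set.ncard_coe_finset]
  -- RHS as a double sum
  have hR : ((FW.filter (fun w => Bad w = ∅)).card : ℤ)
      = ∑ w ∈ FW, ∑ F : Finset (V × V), if F ⊆ Bad w then (-1 : ℤ) ^ F.card else 0 := by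
    have h1 : (FW.filter (fun w => Bad w = ∅)).card
        = ∑ w ∈ FW, if Bad w = ∅ then 1 else 0 := Finset.card_filter _ _
    rw [h1]
    push_cast
    refine Finset.sum_congr rfl ?_
    intro w hw
    have hps : Finset.univ.filter (fun F : Finset (V × V) => F ⊆ Bad w)
        = (Bad w).powerset := by
      ext F
      simp [Finset.mem_powerset]
    rw [← Finset.sum_filter, hps, Finset.sum_powerset_neg_one_pow_card]
  -- LHS as a double sum
  have hL : ∑ σ ∈ Finset.univ.filter (fun σ : Equiv.Perm V => f ∘ ⇑σ = f),
      ∑ F ∈ Finset.univ.filter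
          (fun F : Finset (V × V) =>
            (↑F : Set (V × V)) ⊆ ApermSet σ ∩ A ∧ IsLinear V (↑F : Set (V × V))),
        (-1 : ℤ) ^ F.card
      = ∑ σ : Equiv.Perm V, ∑ F : Finset (V × V),
          if ((↑F : Set (V × V)) ⊆ A ∧ IsLinear V (↑F : Set (V × V))) ∧
             (f ∘ ⇑σ = f ∧ (↑F : Set (V × V)) ⊆ ApermSet σ)
          then (-1 : ℤ) ^ F.card else 0 := by
    rw [Finset.sum_filter]
    refine Finset.sum_congr rfl ?_
    intro σ hσ
    by_cases h : f ∘ ⇑σ = f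
    · rw [if_pos h, Finset.sum_filter]
      refine Finset.sum_congr rfl ?_
      intro F hF
      congr 1
      rw [eq_iff_iff, Set.subset_inter_iff]
      tauto
    · rw [if_neg h, eq_comm]
      refine Finset.sum_eq_zero ?_
      intro F hF
      rw [if_neg]
      tauto
  have hstep1 : ∀ F : Finset (V × V), ∑ σ : Equiv.Perm V,
      (if ((↑F : Set (V × V)) ⊆ A ∧ IsLinear V (↑F : Set (V × V))) ∧
          (f ∘ ⇑σ = f ∧ (↑F : Set (V × V)) ⊆ ApermSet σ)
       then (-1 : ℤ) ^ F.card else 0)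
      = (if ((↑F : Set (V × V)) ⊆ A ∧ IsLinear V (↑F : Set (V × V)))
         then ((Finset.univ.filter (fun σ : Equiv.Perm V =>
            f ∘ ⇑σ = f ∧ (↑F : Set (V × V)) ⊆ ApermSet σ)).card : ℤ) * (-1 : ℤ) ^ F.card
         else 0) := by
    intro F
    by_cases hc : ((↑F : Set (V × V)) ⊆ A ∧ IsLinear V (↑F : Set (V × V)))
    · rw [if_pos hc]
      rw [Finset.card_filter]
      push_cast
      rw [Finset.sum_mul]
      refine Finset.sum_congr rfl ?_
      intro σ hσ
      by_cases h2 : (f ∘ ⇑σ = f ∧ (↑F : Set (V × V)) ⊆ ApermSet σ)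
      · rw [if_pos ⟨hc, h2⟩, if_pos h2]
        ring
      · rw [if_neg (fun hh => h2 hh.2), if_neg h2]
        ring
    · rw [if_neg hc]
      refine Finset.sum_eq_zero ?_
      intro σ hσ
      rw [if_neg (fun hh => hc hh.1)]
  have hstep2 : ∀ F : Finset (V × V), ∑ w ∈ FW, (if F ⊆ Bad w then (-1 : ℤ) ^ F.card else 0)
      = ((FW.filter (fun w => F ⊆ Bad w)).card : ℤ) * (-1 : ℤ) ^ F.card := by
    intro F
    rw [Finset.card_filter]
    push_cast
    rw [Finset.sum_mul]
    refine Finset.sum_congr rfl ?_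
    intro w hw
    by_cases h2 : F ⊆ Bad w
    · rw [if_pos h2, if_pos h2]; ring
    · rw [if_neg h2, if_neg h2]; ring
  have main : ∀ F : Finset (V × V), (if ((↑F : Set (V × V)) ⊆ A ∧ IsLinear V (↑F : Set (V × V)))
      then ((Finset.univ.filter (fun σ : Equiv.Perm V =>
         f ∘ ⇑σ = f ∧ (↑F : Set (V × V)) ⊆ ApermSet σ)).card : ℤ)
      else 0) = ((FW.filter (fun w => F ⊆ Bad w)).card : ℤ) := by
    intro F
    by_cases hlc : ∀ p : V × V, p ∈ F → f p.1 = f p.2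
    · by_cases hA : (↑F : Set (V × V)) ⊆ A
      · by_cases hlin : IsLinear V (↑F : Set (V × V))
        · -- all conditions hold: use core
          rw [if_pos ⟨hA, hlin⟩]
          congr 1
          obtain ⟨w0, hw0n, hw0f, hw0a⟩ := RB.exists_listing_of_linear hlin
          have hcore := RB.core f ((↑F : Set (V × V)).ncard) Finset.univ ↑F rfl
            ⟨w0, hw0n, fun x => ⟨fun _ => Finset.mem_univ x, fun _ => hw0f x⟩, hw0a⟩
            (fun p hp => hlc p hp)
          have e1 : {σ : Equiv.Perm V // (∀ v ∉ (Finset.univ : Finset V), σ v = v) ∧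
              f ∘ ⇑σ = f ∧ (↑F : Set (V × V)) ⊆ ApermSet σ} ≃
              {σ : Equiv.Perm V // f ∘ ⇑σ = f ∧ (↑F : Set (V × V)) ⊆ ApermSet σ} :=
            Equiv.subtypeEquivRight fun σ => by simp
          rw [Nat.card_congr e1] at hcore
          have hσcard : (Finset.univ.filter (fun σ : Equiv.Perm V =>
              f ∘ ⇑σ = f ∧ (↑F : Set (V × V)) ⊆ ApermSet σ)).card
              = Nat.card {σ : Equiv.Perm V // f ∘ ⇑σ = f ∧
                  (↑F : Set (V × V)) ⊆ ApermSet σ} := by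
            rw [Nat.card_eq_fintype_card, Fintype.card_subtype]
          rw [hσcard, hcore]
          have hset : {w : List V | w.Nodup ∧ (∀ x, x ∈ w ↔ x ∈ (Finset.univ : Finset V)) ∧
              w.Chain' (fun p q => f p ≤ f q) ∧ (↑F : Set (V × V)) ⊆ arcsList w}
              = ↑(FW.filter (fun w => F ⊆ Bad w)) := by
            ext w
            simp only [Set.mem_setOf_eq, Finset.coe_filter, Set.mem_setOf_eq, hFWmem]
            constructor
            · rintro ⟨h1, h2, h3, h4⟩
              refine ⟨⟨h1, fun x => (h2 x).2 (Finset.mem_univ x), h3⟩, ?_⟩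
              intro p hp
              exact (hBadmem _ _).2 ⟨h4 hp, hA hp, hlc p hp⟩
            · rintro ⟨⟨h1, h2, h3⟩, h4⟩
              refine ⟨h1, fun x => ⟨fun _ => Finset.mem_univ x, fun _ => h2 x⟩, h3, ?_⟩
              intro p hp
              exact ((hBadmem _ _).1 (h4 hp)).1
          calc Nat.card {w : List V // w.Nodup ∧ (∀ x, x ∈ w ↔ x ∈ (Finset.univ : Finset V)) ∧
              w.Chain' (fun p q => f p ≤ f q) ∧ (↑F : Set (V × V)) ⊆ arcsList w}
              = Set.ncard {w : List V | w.Nodup ∧ (∀ x, x ∈ w ↔ x ∈ (Finset.univ : Finset V)) ∧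
              w.Chain' (fun p q => f p ≤ f q) ∧ (↑F : Set (V × V)) ⊆ arcsList w} :=
                Nat.card_coe_set_eq _
          _ = (FW.filter (fun w => F ⊆ Bad w)).card := by
                rw [hset, Set.ncard_coe_finset]
        · -- not linear: both sides zero
          rw [if_neg (fun hh => hlin hh.2)]
          have hempty : FW.filter (fun w => F ⊆ Bad w) = ∅ := by
            rw [Finset.eq_empty_iff_forall_notMem]
            intro w hw
            rw [Finset.mem_filter, hFWmem] at hw
            obtain ⟨⟨h1, h2, h3⟩, h4⟩ := hw
            refine hlin (RB.linear_of_subset_arcs h1 h2 ?_)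
            intro p hp
            exact ((hBadmem _ _).1 (h4 hp)).1
          rw [hempty]
          simp
      · -- not subset of A: both sides zero
        rw [if_neg (fun hh => hA hh.1)]
        have hempty : FW.filter (fun w => F ⊆ Bad w) = ∅ := by
          rw [Finset.eq_empty_iff_forall_notMem]
          intro w hw
          rw [Finset.mem_filter] at hw
          refine hA ?_
          intro p hp
          exact ((hBadmem _ _).1 (hw.2 hp)).2.1
        rw [hempty]
        simp
    · -- not level-constant: both sides zero
      push_neg at hlc
      obtain ⟨p, hpF, hpne⟩ := hlc
      have h2 : Finset.univ.filter (fun σ : Equiv.Perm V =>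
          f ∘ ⇑σ = f ∧ (↑F : Set (V × V)) ⊆ ApermSet σ) = ∅ := by
        rw [Finset.eq_empty_iff_forall_notMem]
        intro σ hσ
        rw [Finset.mem_filter] at hσ
        obtain ⟨-, hfσ, hFσ⟩ := hσ
        rw [RB.subset_aperm_iff] at hFσ
        have hone := hFσ p (by exact_mod_cast hpF)
        have heq2 : f p.1 = f p.2 := by
          rw [← hone]
          exact (congrFun hfσ p.1).symm
        exact hpne heq2
      have hempty : FW.filter (fun w => F ⊆ Bad w) = ∅ := by
        rw [Finset.eq_empty_iff_forall_notMem]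
        intro w hw
        rw [Finset.mem_filter] at hw
        exact hpne ((hBadmem _ _).1 (hw.2 hpF)).2.2
      rw [hempty, h2]
      simp
  have hperF : ∀ F : Finset (V × V), (∑ σ : Equiv.Perm V,
      if ((↑F : Set (V × V)) ⊆ A ∧ IsLinear V (↑F : Set (V × V))) ∧
         (f ∘ ⇑σ = f ∧ (↑F : Set (V × V)) ⊆ ApermSet σ)
      then (-1 : ℤ) ^ F.card else 0)
      = ∑ w ∈ FW, if F ⊆ Bad w then (-1 : ℤ) ^ F.card else 0 := by
    intro F
    rw [hstep1 F, hstep2 F, ← main F]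
    by_cases hc : ((↑F : Set (V × V)) ⊆ A ∧ IsLinear V (↑F : Set (V × V)))
    · rw [if_pos hc, if_pos hc]
    · rw [if_neg hc, if_neg hc]
      ring
  have e3 : (∑ σ : Equiv.Perm V, ∑ F : Finset (V × V),
      if ((↑F : Set (V × V)) ⊆ A ∧ IsLinear V (↑F : Set (V × V))) ∧
         (f ∘ ⇑σ = f ∧ (↑F : Set (V × V)) ⊆ ApermSet σ)
      then (-1 : ℤ) ^ F.card else 0)
      = ∑ F : Finset (V × V), ∑ σ : Equiv.Perm V,
      if ((↑F : Set (V × V)) ⊆ A ∧ IsLinear V (↑F : Set (V × V))) ∧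
         (f ∘ ⇑σ = f ∧ (↑F : Set (V × V)) ⊆ ApermSet σ)
      then (-1 : ℤ) ^ F.card else 0 := Finset.sum_comm
  have e4 : (∑ w ∈ FW, ∑ F : Finset (V × V), if F ⊆ Bad w then (-1 : ℤ) ^ F.card else 0)
      = ∑ F : Finset (V × V), ∑ w ∈ FW, if F ⊆ Bad w then (-1 : ℤ) ^ F.card else 0 :=
    Finset.sum_comm
  rw [hL, hR, e3, e4]
  exact Finset.sum_congr rfl fun F _ => hperF F
end
end

section
/- Let V be a finite set and σ a permutation of V. Then, as formal power series in countably many variables x_1, x_2, x_3, … over ℤ, ∑_f ∏_{v ∈ V} x_{f(v)} = p_{type(σ)}, where the sum ranges over all maps f: V → ℙ (the positive integers) satisfying f∘σ = f. -/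
open scoped Classical

noncomputable section

namespace PolyaAux

variable {V : Type} [Fintype V] [DecidableEq V] (σ : Equiv.Perm V)

/-- The cycle (orbit) of `v` under `σ`. -/
def cyc (v : V) : Finset V := Finset.univ.filter fun u => σ.SameCycle v u

variable {σ}

lemma mem_cyc {v u : V} : u ∈ cyc σ v ↔ σ.SameCycle v u := by
  simp [cyc]

lemma self_mem_cyc (v : V) : v ∈ cyc σ v := mem_cyc.2 (Equiv.Perm.SameCycle.refl σ v)

lemma cyc_eq_of_sameCycle {v w : V} (h : σ.SameCycle v w) : cyc σ v = cyc σ w := by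
  ext u
  simp only [mem_cyc]
  exact ⟨fun h' => h.symm.trans h', fun h' => h.trans h'⟩

lemma mem_cyc_iff_cyc_eq {v u : V} : u ∈ cyc σ v ↔ cyc σ u = cyc σ v := by
  constructor
  · intro h
    exact (cyc_eq_of_sameCycle (mem_cyc.1 h)).symm
  · intro h
    rw [← h]
    exact self_mem_cyc u

lemma cyc_mem (v : V) : cyc σ v ∈ cyclesOf σ := by
  have : cyc σ v = Finset.univ.filter fun u => σ.SameCycle v u := rfl
  simp only [cyclesOf, Finset.mem_image]
  exact ⟨v, Finset.mem_univ v, this.symm⟩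

lemma mem_cyclesOf {O : Finset V} (hO : O ∈ cyclesOf σ) : ∃ v, O = cyc σ v := by
  simp only [cyclesOf, Finset.mem_image] at hO
  obtain ⟨v, _, hv⟩ := hO
  exact ⟨v, hv.symm⟩

lemma cyc_apply (v : V) : cyc σ (σ v) = cyc σ v :=
  (cyc_eq_of_sameCycle (Equiv.Perm.sameCycle_apply_right.2 (Equiv.Perm.SameCycle.refl σ v))).symm

lemma card_cyc_pos (v : V) : 0 < (cyc σ v).card :=
  Finset.card_pos.2 ⟨v, self_mem_cyc v⟩

lemma invariant_constant {f : V → ℕ+} (hf : f ∘ ⇑σ = f) {v u : V}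
    (h : σ.SameCycle v u) : f v = f u := by
  obtain ⟨i, rfl⟩ := h
  have key : ∀ j : ℤ, f ((σ ^ j) v) = f v := by
    intro j
    induction j using Int.induction_on with
    | zero => simp
    | succ k ih =>
        have : (σ ^ ((k : ℤ) + 1)) v = σ ((σ ^ (k : ℤ)) v) := by
          rw [add_comm, zpow_add, zpow_one]; rfl
        rw [this, ← ih]
        exact congrFun hf ((σ ^ (k : ℤ)) v)
    | pred k ih =>
        have h1 : σ ((σ ^ ((-k : ℤ) - 1)) v) = (σ ^ (-k : ℤ)) v := by
          have he : (1 : ℤ) + (-(k : ℤ) - 1) = -(k : ℤ) := by ring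
          have : (σ ^ (-k : ℤ)) = σ * σ ^ ((-k : ℤ) - 1) := by
            rw [← zpow_one_add, he]
          rw [this]; rfl
        have := congrFun hf ((σ ^ ((-k : ℤ) - 1)) v)
        simp only [Function.comp_apply] at this
        rw [h1] at this
        rw [← this]; exact ih
  exact (key i).symm

variable (σ)

/-- The map sending `f : V → ℕ+` to the corresponding element of the antidiagonal. -/
def Phi (f : V → ℕ+) : Finset V →₀ (ℕ+ →₀ ℕ) :=
  ∑ v : V, Finsupp.single (cyc σ v) (Finsupp.single (f v) 1)

variable {σ}

lemma Phi_support (f : V → ℕ+) : (Phi σ f).support ⊆ cyclesOf σ := by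
  intro O hO
  obtain ⟨v, _, hv⟩ := Finsupp.mem_support_finset_sum O hO
  have := Finsupp.support_single_subset hv
  simp only [Finset.mem_singleton] at this
  rw [this]
  exact cyc_mem v

lemma sum_Phi (f : V → ℕ+) :
    ∑ O ∈ cyclesOf σ, Phi σ f O = ∑ v : V, Finsupp.single (f v) 1 := by
  simp only [Phi, Finset.sum_apply']
  rw [Finset.sum_comm]
  refine Finset.sum_congr rfl fun v _ => ?_
  rw [Finset.sum_congr rfl fun O (_ : O ∈ cyclesOf σ) => Finsupp.single_apply]
  rw [Finset.sum_ite_eq (cyclesOf σ) (cyc σ v) (fun _ => Finsupp.single (f v) 1)]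
  simp [cyc_mem v]

lemma Phi_apply_cyc {f : V → ℕ+} (hf : f ∘ ⇑σ = f) (w : V) :
    Phi σ f (cyc σ w) = Finsupp.single (f w) (cyc σ w).card := by
  simp only [Phi, Finset.sum_apply']
  rw [Finset.sum_congr rfl fun v (_ : v ∈ Finset.univ) => Finsupp.single_apply]
  rw [← Finset.sum_filter]
  have hfil : Finset.univ.filter (fun v => cyc σ v = cyc σ w) = cyc σ w := by
    ext u
    simp only [Finset.mem_filter, Finset.mem_univ, true_and]
    exact mem_cyc_iff_cyc_eq.symm
  rw [hfil]
  have hconst : ∀ u ∈ cyc σ w, Finsupp.single (f u) (1 : ℕ) = Finsupp.single (f w) 1 := by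
    intro u hu
    rw [invariant_constant hf (mem_cyc.1 hu)]
  rw [Finset.sum_congr rfl hconst, Finset.sum_const, Finsupp.smul_single, smul_eq_mul, mul_one]

end PolyaAux

/-- **Lemma (Pólya counting).** `∑_f ∏_{v ∈ V} x_{f(v)} = p_{type σ}`, summed over all
maps `f : V → ℙ` with `f ∘ σ = f`. The left-hand side is the power series whose
coefficient at a monomial `d` is the number of such maps `f` whose associated monomial
`∏_{v} x_{f(v)}` equals `d`. -/
theorem sum_fixed_maps_eq_pType (V : Type) [Fintype V] [DecidableEq V]
    (σ : Equiv.Perm V) :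
    ((fun d =>
        ((Set.ncard {f : V → ℕ+ |
            f ∘ ⇑σ = f ∧ (∑ v : V, Finsupp.single (f v) 1) = d}) : ℤ)) :
      MvPowerSeries ℕ+ ℤ)
      = pType σ := by
  classical
  apply MvPowerSeries.ext
  intro d
  show ((Set.ncard {f : V → ℕ+ | f ∘ ⇑σ = f ∧ (∑ v : V, Finsupp.single (f v) 1) = d}) : ℤ) = MvPowerSeries.coeff d (pType σ)
  set s := cyclesOf σ with hs
  set P : ((Finset V) →₀ (ℕ+ →₀ ℕ)) → Prop :=
    fun l => ∀ O ∈ s, ∃ i : ℕ+, l O = Finsupp.single i O.card with hP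
  have hrhs : MvPowerSeries.coeff d (pType σ) =
      (((Finset.finsuppAntidiag s d).filter P).card : ℤ) := by
    rw [pType, MvPowerSeries.coeff_prod]
    have hcoeff : ∀ (O : Finset V) (e : ℕ+ →₀ ℕ),
        MvPowerSeries.coeff e (pSum O.card) =
          if ∃ i : ℕ+, e = Finsupp.single i O.card then 1 else 0 := fun O e => rfl
    calc ∑ l ∈ Finset.finsuppAntidiag s d, ∏ O ∈ s, MvPowerSeries.coeff (l O) (pSum O.card)
        = ∑ l ∈ Finset.finsuppAntidiag s d, if P l then (1 : ℤ) else 0 := by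
          refine Finset.sum_congr rfl fun l _ => ?_
          rw [Finset.prod_congr rfl fun O (_ : O ∈ s) => hcoeff O (l O)]
          by_cases hPl : P l
          · rw [if_pos hPl]
            exact Finset.prod_eq_one fun O hO => by rw [if_pos (hPl O hO)]
          · rw [if_neg hPl]
            simp only [hP, not_forall, not_exists] at hPl
            obtain ⟨O, hO, hO2⟩ := hPl
            exact Finset.prod_eq_zero hO (by rw [if_neg (by push_neg; exact hO2)])
      _ = (((Finset.finsuppAntidiag s d).filter P).card : ℤ) := by rw [Finset.sum_boole]
  rw [hrhs]
  congr 1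
  rw [← Set.ncard_coe_finset]
  apply Set.ncard_congr (fun f _ => PolyaAux.Phi σ f)
  · rintro f ⟨hf1, hf2⟩
    simp only [Finset.coe_filter, Set.mem_setOf_eq, Finset.mem_finsuppAntidiag]
    refine ⟨⟨?_, PolyaAux.Phi_support f⟩, ?_⟩
    · rw [PolyaAux.sum_Phi f, hf2]
    · intro O hO
      obtain ⟨w, rfl⟩ := PolyaAux.mem_cyclesOf hO
      exact ⟨f w, PolyaAux.Phi_apply_cyc hf1 w⟩
  · rintro f g ⟨hf1, _⟩ ⟨hg1, _⟩ h
    funext v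
    have h1 := PolyaAux.Phi_apply_cyc hf1 v
    have h2 := PolyaAux.Phi_apply_cyc hg1 v
    rw [h, h2] at h1
    exact ((Finsupp.single_left_inj (PolyaAux.card_cyc_pos v).ne').1 h1.symm)
  · intro l hl
    simp only [Finset.coe_filter, Set.mem_setOf_eq, Finset.mem_finsuppAntidiag] at hl
    obtain ⟨⟨hsum, hsupp⟩, hl2⟩ := hl
    set F : {O // O ∈ s} → ℕ+ := fun O => (hl2 O.1 O.2).choose with hF
    set f : V → ℕ+ := fun v => F ⟨PolyaAux.cyc σ v, PolyaAux.cyc_mem v⟩ with hfdef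
    have hinv : f ∘ ⇑σ = f := by
      funext v
      show F ⟨PolyaAux.cyc σ (σ v), _⟩ = F ⟨PolyaAux.cyc σ v, _⟩
      exact congrArg F (Subtype.ext (PolyaAux.cyc_apply v))
    have hPhi : PolyaAux.Phi σ f = l := by
      ext O e
      by_cases hO : O ∈ s
      · obtain ⟨w, rfl⟩ := PolyaAux.mem_cyclesOf hO
        rw [PolyaAux.Phi_apply_cyc hinv w]
        have hspec := (hl2 _ hO).choose_spec
        rw [hspec]
      · rw [Finsupp.notMem_support_iff.1 (fun h => hO (PolyaAux.Phi_support f h)),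
            Finsupp.notMem_support_iff.1 (fun h => hO (hsupp h))]
    refine ⟨f, ⟨hinv, ?_⟩, hPhi⟩
    rw [← PolyaAux.sum_Phi f, Finset.sum_congr rfl fun O (_ : O ∈ s) => by rw [hPhi], hsum]
end
end
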